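/- arXiv:2309.13263 — 5 statements merged into one kernel-verified Lean document; each statement's English description precedes it below -/
import Mathlib

section
/- Let $X$ be a complex Banach space and $A \in L(X)$ a bounded linear operator. Define $m(A) = \inf\{\Re \ell_z(A z) : \|z\| = 1, \ell_z \in T(z)\}$ and $k(A) = \sup\{\Re \ell_z(A z) : \|z\| = 1, \ell_z \in T(z)\}$, where $T(z) = \{\ell \in L(X,\mathbb{C}) : \ell(z) = \|z\|, \|\ell\| = 1\}$. Then for all $t \geq 0$ and all $u \in X$ with $\|u\| = 1$, one has $e^{m(A)t} \leq \|e^{tA} u\| \leq e^{k(A)t}$. -/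
open Metric Set

noncomputable section

/-- The set of norming functionals of `z`. -/
def normingFunctionals {X : Type*} [NormedAddCommGroup X] [NormedSpace ℂ X] (z : X) :
    Set (X →L[ℂ] ℂ) := {ℓ | ℓ z = (‖z‖ : ℂ) ∧ ‖ℓ‖ = 1}

/-- `m(A)`, the lower numerical bound of `A`. -/
def mLower {X : Type*} [NormedAddCommGroup X] [NormedSpace ℂ X] (A : X →L[ℂ] X) : ℝ :=
  sInf {x | ∃ z ℓ, ‖z‖ = 1 ∧ ℓ ∈ normingFunctionals z ∧ x = (ℓ (A z)).re}

/-- `k(A)`, the upper numerical bound of `A`. -/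
def kUpper {X : Type*} [NormedAddCommGroup X] [NormedSpace ℂ X] (A : X →L[ℂ] X) : ℝ :=
  sSup {x | ∃ z ℓ, ‖z‖ = 1 ∧ ℓ ∈ normingFunctionals z ∧ x = (ℓ (A z)).re}


set_option linter.unusedSectionVars false
section Helpers
open NormedSpace
variable {X : Type*} [NormedAddCommGroup X] [NormedSpace ℂ X] [CompleteSpace X]

lemma hasDerivAt_expA (A : X →L[ℂ] X) (u : X) (t : ℝ) :
    HasDerivAt (fun s : ℝ => exp ((s : ℂ) • A) u) (A (exp ((t : ℂ) • A) u)) t := by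
  have h1 : HasDerivAt (fun z : ℂ => exp (z • A)) (A * exp ((t : ℂ) • A)) (t : ℂ) :=
    hasDerivAt_exp_smul_const' A (t : ℂ)
  have h2 : HasDerivAt (fun s : ℝ => exp ((s : ℂ) • A)) (A * exp ((t : ℂ) • A)) t := by
    simpa [Function.comp_def] using (h1.hasFDerivAt.restrictScalars ℝ).comp_hasDerivAt t Complex.ofRealCLM.hasDerivAt
  have h3 := ((ContinuousLinearMap.apply ℂ X u).restrictScalars ℝ).hasFDerivAt.comp_hasDerivAt t h2
  simpa [Function.comp_def] using h3

def numSet (A : X →L[ℂ] X) : Set ℝ :=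
  {x | ∃ z ℓ, ‖z‖ = 1 ∧ ℓ ∈ normingFunctionals z ∧ x = (ℓ (A z)).re}

lemma numSet_abs_le (A : X →L[ℂ] X) : ∀ x ∈ numSet A, |x| ≤ ‖A‖ := by
  rintro x ⟨z, ℓ, hz, ⟨hℓz, hℓ⟩, rfl⟩
  calc |(ℓ (A z)).re| ≤ ‖ℓ (A z)‖ := Complex.abs_re_le_norm _
    _ ≤ ‖ℓ‖ * ‖A z‖ := ℓ.le_opNorm _
    _ ≤ 1 * (‖A‖ * ‖z‖) := by rw [hℓ]; gcongr; exact A.le_opNorm z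
    _ = ‖A‖ := by rw [hz]; ring

lemma numSet_bounds (A : X →L[ℂ] X) {z : X} (hz : z ≠ 0) {ℓ : X →L[ℂ] ℂ}
    (hℓ : ℓ ∈ normingFunctionals z) :
    sInf (numSet A) * ‖z‖ ≤ (ℓ (A z)).re ∧ (ℓ (A z)).re ≤ sSup (numSet A) * ‖z‖ := by
  obtain ⟨hℓz, hℓ1⟩ := hℓ
  set c : ℝ := ‖z‖ with hc
  have hc0 : 0 < c := norm_pos_iff.mpr hz
  have hmem : c⁻¹ * (ℓ (A z)).re ∈ numSet A := by
    refine ⟨((c⁻¹ : ℝ) : ℂ) • z, ℓ, ?_, ⟨?_, hℓ1⟩, ?_⟩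
    · rw [norm_smul, Complex.norm_real, Real.norm_eq_abs, abs_of_pos (inv_pos.mpr hc0)]
      field_simp
      exact hc.symm
    · rw [map_smul, hℓz, norm_smul, Complex.norm_real, Real.norm_eq_abs,
        abs_of_pos (inv_pos.mpr hc0), smul_eq_mul, Complex.ofReal_mul]
    · simp [map_smul, smul_eq_mul, Complex.mul_re]
  constructor
  · have h := csInf_le ⟨-‖A‖, fun x hx => neg_le_of_abs_le (numSet_abs_le A x hx)⟩ hmem
    have := mul_le_mul_of_nonneg_right h hc0.le
    rwa [inv_mul_eq_div, div_mul_cancel₀ _ hc0.ne'] at this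
  · have h := le_csSup ⟨‖A‖, fun x hx => le_of_abs_le (numSet_abs_le A x hx)⟩ hmem
    have := mul_le_mul_of_nonneg_right h hc0.le
    rwa [inv_mul_eq_div, div_mul_cancel₀ _ hc0.ne'] at this

open Filter Topology in
theorem exp_growth_bounds' (A : X →L[ℂ] X) :
    ∀ t : ℝ, 0 ≤ t → ∀ u : X, ‖u‖ = 1 →
      Real.exp (sInf (numSet A) * t) ≤ ‖NormedSpace.exp ((t : ℂ) • A) u‖ ∧
      ‖NormedSpace.exp ((t : ℂ) • A) u‖ ≤ Real.exp (sSup (numSet A) * t) := by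
  intro t0 ht0 u hu
  set v : ℝ → X := fun s => exp ((s : ℂ) • A) u with hvdef
  set φ : ℝ → ℝ := fun s => ‖v s‖ with hφdef
  have hv : ∀ s, HasDerivAt v (A (v s)) s := fun s => hasDerivAt_expA A u s
  have hvc : Continuous v := continuous_iff_continuousAt.mpr fun s => (hv s).continuousAt
  have hφc : Continuous φ := hvc.norm
  have hvne : ∀ s, v s ≠ 0 := by
    intro s h
    have hcomm : Commute ((-s : ℂ) • A) ((s : ℂ) • A) :=
      ((Commute.refl A).smul_left _).smul_right _
    have h1 : exp ((-s : ℂ) • A) * exp ((s : ℂ) • A) = 1 := by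
      let +nondep : NormedAlgebra ℚ (X →L[ℂ] X) := .restrictScalars ℚ ℂ (X →L[ℂ] X)
      rw [← exp_add_of_commute hcomm, ← add_smul]
      norm_num [exp_zero]
    have : u = 0 := by
      have := congrArg (fun (B : X →L[ℂ] X) => B u) h1
      simp only [ContinuousLinearMap.mul_apply, ContinuousLinearMap.one_apply] at this
      rw [← this, show exp ((s:ℂ) • A) u = v s from rfl, h, map_zero]
    rw [this, norm_zero] at hu; norm_num at hu
  have hslope : ∀ x : ℝ,
      Tendsto (fun z => ‖slope v x z - A (v z)‖) (𝓝[>] x) (𝓝 0) := by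
    intro x
    have t1 : Tendsto (slope v x) (𝓝[>] x) (𝓝 (A (v x))) :=
      (hasDerivAt_iff_tendsto_slope.mp (hv x)).mono_left
        (nhdsWithin_mono x fun z hz => ne_of_gt hz)
    have t2 : Tendsto (fun z => A (v z)) (𝓝[>] x) (𝓝 (A (v x))) :=
      ((A.continuous.comp hvc).tendsto x).mono_left nhdsWithin_le_nhds
    simpa using (t1.sub t2).norm
  have hslope_eq : ∀ x z : ℝ, z ≠ x → ∀ ℓ : X →L[ℂ] ℂ,
      (z - x)⁻¹ * (ℓ (v z - v x)).re = (ℓ (slope v x z)).re := by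
    intro x z hzx ℓ
    rw [slope_def_module, ℓ.map_smul_of_tower, Complex.smul_re, smul_eq_mul]
  -- upper Dini estimate
  have hupper : ∀ x : ℝ, ∀ r, sSup (numSet A) * φ x < r →
      ∀ᶠ z in 𝓝[>] x, (z - x)⁻¹ * (φ z - φ x) < r := by
    intro x r hr
    have hg : Tendsto (fun z => sSup (numSet A) * φ z + ‖slope v x z - A (v z)‖)
        (𝓝[>] x) (𝓝 (sSup (numSet A) * φ x + 0)) :=
      (((hφc.tendsto x).mono_left nhdsWithin_le_nhds).const_mul _).add (hslope x)
    rw [add_zero] at hg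
    have hev := hg.eventually_lt_const hr
    filter_upwards [hev, self_mem_nhdsWithin] with z hz hzx
    refine lt_of_le_of_lt ?_ hz
    obtain ⟨ℓ, hℓ1, hℓz⟩ := exists_dual_vector ℂ (v z) (norm_ne_zero_iff.mpr (hvne z))
    have hrex : (ℓ (v x)).re ≤ φ x := by
      calc (ℓ (v x)).re ≤ ‖ℓ (v x)‖ := Complex.re_le_norm _
        _ ≤ ‖ℓ‖ * ‖v x‖ := ℓ.le_opNorm _
        _ = φ x := by rw [hℓ1, one_mul]
    have hrez : (ℓ (v z)).re = φ z := by simp [hℓz, hφdef]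
    have h1 : φ z - φ x ≤ (ℓ (v z - v x)).re := by
      rw [map_sub, Complex.sub_re]; linarith
    have h2 : (z - x)⁻¹ * (φ z - φ x) ≤ (z - x)⁻¹ * (ℓ (v z - v x)).re :=
      mul_le_mul_of_nonneg_left h1 (inv_nonneg.mpr (by linarith [mem_Ioi.mp hzx]))
    have h5 : (ℓ (A (v z))).re ≤ sSup (numSet A) * ‖v z‖ :=
      (numSet_bounds A (hvne z) ⟨hℓz, hℓ1⟩).2
    have h6 : (ℓ (slope v x z - A (v z))).re ≤ ‖slope v x z - A (v z)‖ := by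
      calc (ℓ _).re ≤ ‖ℓ _‖ := Complex.re_le_norm _
        _ ≤ ‖ℓ‖ * ‖slope v x z - A (v z)‖ := ℓ.le_opNorm _
        _ = _ := by rw [hℓ1, one_mul]
    have h4 : (ℓ (slope v x z)).re
        = (ℓ (A (v z))).re + (ℓ (slope v x z - A (v z))).re := by
      rw [map_sub, Complex.sub_re]; ring
    calc (z - x)⁻¹ * (φ z - φ x) ≤ (z - x)⁻¹ * (ℓ (v z - v x)).re := h2
      _ = (ℓ (slope v x z)).re := hslope_eq x z (ne_of_gt (mem_Ioi.mp hzx)) ℓ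
      _ ≤ sSup (numSet A) * φ z + ‖slope v x z - A (v z)‖ := by rw [h4]; exact add_le_add h5 h6
  -- lower Dini estimate
  have hlowerD : ∀ x : ℝ, ∀ r, sInf (numSet A) * (-φ x) < r →
      ∀ᶠ z in 𝓝[>] x, (z - x)⁻¹ * (-φ z - -φ x) < r := by
    intro x r hr
    obtain ⟨ℓ, hℓ1, hℓx⟩ := exists_dual_vector ℂ (v x) (norm_ne_zero_iff.mpr (hvne x))
    have hm : sInf (numSet A) * ‖v x‖ ≤ (ℓ (A (v x))).re :=
      (numSet_bounds A (hvne x) ⟨hℓx, hℓ1⟩).1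
    have t1 : Tendsto (slope v x) (𝓝[>] x) (𝓝 (A (v x))) :=
      (hasDerivAt_iff_tendsto_slope.mp (hv x)).mono_left
        (nhdsWithin_mono x fun z hz => ne_of_gt hz)
    have htend : Tendsto (fun z => -(ℓ (slope v x z)).re) (𝓝[>] x)
        (𝓝 (-(ℓ (A (v x))).re)) :=
      ((Complex.continuous_re.comp ℓ.continuous).tendsto _ |>.comp t1).neg
    have hlim : -(ℓ (A (v x))).re < r := by
      have : sInf (numSet A) * (-φ x) = -(sInf (numSet A) * ‖v x‖) := by ring
      linarith
    filter_upwards [htend.eventually_lt_const hlim, self_mem_nhdsWithin] with z hz hzx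
    refine lt_of_le_of_lt ?_ hz
    have hrez : (ℓ (v z)).re ≤ φ z := by
      calc (ℓ (v z)).re ≤ ‖ℓ (v z)‖ := Complex.re_le_norm _
        _ ≤ ‖ℓ‖ * ‖v z‖ := ℓ.le_opNorm _
        _ = φ z := by rw [hℓ1, one_mul]
    have hrex : (ℓ (v x)).re = φ x := by simp [hℓx, hφdef]
    have h1 : -φ z - -φ x ≤ -(ℓ (v z - v x)).re := by
      rw [map_sub, Complex.sub_re]; linarith
    calc (z - x)⁻¹ * (-φ z - -φ x) ≤ (z - x)⁻¹ * -(ℓ (v z - v x)).re :=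
        mul_le_mul_of_nonneg_left h1 (inv_nonneg.mpr (by linarith [mem_Ioi.mp hzx]))
      _ = -(ℓ (slope v x z)).re := by
        rw [mul_neg, hslope_eq x z (ne_of_gt (mem_Ioi.mp hzx)) ℓ]
  have hφ0 : φ 0 = 1 := by simp [hφdef, hvdef, exp_zero, hu]
  constructor
  · have hlo := le_gronwallBound_of_liminf_deriv_right_le (f := fun s => -φ s)
      (f' := fun x => sInf (numSet A) * (-φ x)) (δ := -1) (K := sInf (numSet A)) (ε := 0)
      (a := 0) (b := t0) hφc.neg.continuousOn
      (fun x _ r hr => (hlowerD x r hr).frequently)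
      (by simp [hφ0]) (fun x _ => by rw [add_zero]) t0 (right_mem_Icc.mpr ht0)
    rw [gronwallBound_ε0, sub_zero, neg_one_mul] at hlo
    have : Real.exp (sInf (numSet A) * t0) ≤ φ t0 := by linarith
    simpa [hφdef, hvdef] using this
  · have hup := le_gronwallBound_of_liminf_deriv_right_le (f := φ)
      (f' := fun x => sSup (numSet A) * φ x) (δ := 1) (K := sSup (numSet A)) (ε := 0)
      (a := 0) (b := t0) hφc.continuousOn
      (fun x _ r hr => (hupper x r hr).frequently)
      (by rw [hφ0]) (fun x _ => by rw [add_zero]) t0 (right_mem_Icc.mpr ht0)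
    rw [gronwallBound_ε0, sub_zero, one_mul] at hup
    simpa [hφdef, hvdef] using hup

end Helpers

theorem exp_growth_bounds {X : Type*} [NormedAddCommGroup X] [NormedSpace ℂ X]
    [CompleteSpace X] (A : X →L[ℂ] X) :
    ∀ t : ℝ, 0 ≤ t → ∀ u : X, ‖u‖ = 1 →
      Real.exp (mLower A * t) ≤ ‖NormedSpace.exp ((t : ℂ) • A) u‖ ∧
      ‖NormedSpace.exp ((t : ℂ) • A) u‖ ≤ Real.exp (kUpper A * t) := by
  have h1 : mLower A = sInf (numSet A) := rfl
  have h2 : kUpper A = sSup (numSet A) := rfl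
  simp only [h1, h2]
  exact exp_growth_bounds' A
end
end

section
/- Let $\mathbb{B}$ be the unit ball of a complex Banach space $X$, $A \in L(X)$ with $m(A) > 0$, and let $v(z,s,t)$ be a family of Schwarz mappings satisfying the semigroup property with $Dv(0,s,t) = e^{-(t-s)A}$. Then for every $r \in (0,1)$ there exists a constant $M(r) > 0$ such that $\|v(z,s,t_1) - v(z,s,t_2)\| \leq M(r) \|A\| (t_2 - t_1)$ for all $\|z\| \leq r$ and $0 \leq s \leq t_1 < t_2$. -/
open Metric Set

noncomputable section

/-- A Schwarz mapping of the unit ball: holomorphic self-map of the open unit ball fixing `0`. -/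
def IsSchwarzMapping {X : Type*} [NormedAddCommGroup X] [NormedSpace ℂ X] (v : X → X) : Prop :=
  DifferentiableOn ℂ v (ball (0 : X) 1) ∧ MapsTo v (ball (0 : X) 1) (ball (0 : X) 1) ∧ v 0 = 0


section Aux

variable {X : Type*} [NormedAddCommGroup X] [NormedSpace ℂ X]

lemma line_diff (u : X) : Differentiable ℂ (fun l : ℂ => l • u) :=
  (differentiable_id).smul_const u

lemma schwarz_vec {g : X → X} (hd : DifferentiableOn ℂ g (ball 0 1))
    (hm : MapsTo g (ball (0:X) 1) (ball 0 1)) (h0 : g 0 = 0) {y : X} (hy : y ∈ ball (0:X) 1) :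
    ‖g y‖ ≤ ‖y‖ := by
  rcases eq_or_ne y 0 with rfl | hy0
  · simp [h0]
  have hyn : (0:ℝ) < ‖y‖ := norm_pos_iff.mpr hy0
  set u : X := ‖y‖⁻¹ • y with hu
  have hun : ‖u‖ = 1 := by
    rw [hu, norm_smul, norm_inv, norm_norm, inv_mul_cancel₀ hyn.ne']
  set F : ℂ → X := fun l => g (l • u) with hF
  have hmap : ∀ l : ℂ, l ∈ ball (0:ℂ) 1 → (l • u) ∈ ball (0:X) 1 := by
    intro l hl
    simp only [mem_ball, dist_zero_right] at hl ⊢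
    rw [norm_smul, hun, mul_one]; exact hl
  have hdF : DifferentiableOn ℂ F (ball 0 1) :=
    hd.comp ((line_diff u).differentiableOn) hmap
  have hF0 : F 0 = 0 := by simp [hF, h0]
  have hmF : MapsTo F (ball (0:ℂ) 1) (ball (F 0) 1) := by
    intro l hl; rw [hF0]
    simpa using hm (hmap l hl)
  have hyb : (‖y‖ : ℂ) ∈ ball (0:ℂ) 1 := by
    simp only [mem_ball, dist_zero_right, Complex.norm_real, norm_norm]
    simpa using hy
  have := Complex.dist_le_div_mul_dist_of_mapsTo_ball hdF (hmF.mono_right ball_subset_closedBall) hyb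
  have hFy : F (‖y‖ : ℂ) = g y := by
    have : ((‖y‖ : ℂ)) • u = y := by
      rw [hu, Complex.coe_smul, smul_smul, mul_inv_cancel₀ hyn.ne', one_smul]
    show g (((‖y‖:ℂ)) • u) = g y
    rw [this]
  rw [hFy, hF0, dist_zero_right, dist_zero_right, Complex.norm_real, norm_norm,
    div_one, one_mul] at this
  exact this

lemma scalar_slice_lip {h : X → X} (hd : DifferentiableOn ℂ h (ball 0 1))
    (hbd : ∀ x ∈ ball (0:X) 1, ‖h x‖ ≤ 2)
    {R : ℝ} (hR1 : R < 1) (ℓ : X →L[ℂ] ℂ) (hℓ : ‖ℓ‖ = 1)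
    {x e : X} (he : ‖e‖ = 1) (hx : ‖x‖ ≤ R) {t : ℝ} (ht : 0 ≤ t) (ht' : t < 1 - R) :
    ‖ℓ (h (x + t • e)) - ℓ (h x)‖ ≤ 5 / (1 - R) * t := by
  set F : ℂ → ℂ := fun l => ℓ (h (x + l • e)) with hF
  have hmap : ∀ l : ℂ, l ∈ ball (0:ℂ) (1-R) → (x + l • e) ∈ ball (0:X) 1 := by
    intro l hl
    simp only [mem_ball, dist_zero_right] at hl ⊢
    calc ‖x + l • e‖ ≤ ‖x‖ + ‖l • e‖ := norm_add_le _ _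
    _ < R + (1 - R) := by
        rw [norm_smul, he, mul_one]; exact add_lt_add_of_le_of_lt hx hl
    _ = 1 := by ring
  have hdF : DifferentiableOn ℂ F (ball 0 (1-R)) := by
    apply (ℓ.differentiable.comp_differentiableOn (hd.comp _ hmap))
    exact ((differentiable_const x).add (line_diff e)).differentiableOn
  have hmF : MapsTo F (ball (0:ℂ) (1-R)) (ball (F 0) 5) := by
    intro l hl
    simp only [mem_ball]
    have h1 : ‖F l‖ ≤ 2 := by
      calc ‖F l‖ ≤ ‖ℓ‖ * ‖h (x + l • e)‖ := ℓ.le_opNorm _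
      _ ≤ 1 * 2 := by
          rw [hℓ]; exact mul_le_mul_of_nonneg_left (hbd _ (hmap l hl)) zero_le_one
      _ = 2 := one_mul 2
    have h2 : ‖F 0‖ ≤ 2 := by
      have h0 : (0:ℂ) ∈ ball (0:ℂ) (1-R) := by
        simp only [mem_ball, dist_self]; linarith
      calc ‖F 0‖ ≤ ‖ℓ‖ * ‖h (x + (0:ℂ) • e)‖ := ℓ.le_opNorm _
      _ ≤ 1 * 2 := by
          rw [hℓ]; exact mul_le_mul_of_nonneg_left (hbd _ (hmap 0 h0)) zero_le_one
      _ = 2 := one_mul 2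
    calc dist (F l) (F 0) ≤ ‖F l‖ + ‖F 0‖ := dist_le_norm_add_norm _ _
    _ ≤ 2 + 2 := add_le_add h1 h2
    _ < 5 := by norm_num
  have htb : (t : ℂ) ∈ ball (0:ℂ) (1-R) := by
    simp only [mem_ball, dist_zero_right, Complex.norm_real, Real.norm_eq_abs, abs_of_nonneg ht]
    exact ht'
  have := Complex.dist_le_div_mul_dist_of_mapsTo_ball hdF (hmF.mono_right ball_subset_closedBall) htb
  have hFt : F (t:ℂ) = ℓ (h (x + t • e)) := by rw [hF]; norm_num [Complex.coe_smul]
  have hF0 : F 0 = ℓ (h x) := by simp [hF]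
  rw [hFt, hF0, dist_eq_norm, dist_zero_right, Complex.norm_real, Real.norm_eq_abs,
    abs_of_nonneg ht] at this
  exact this

lemma lemA {g : X → X} (hd : DifferentiableOn ℂ g (ball 0 1))
    (hm : MapsTo g (ball (0:X) 1) (ball 0 1)) (h0 : g 0 = 0)
    {R : ℝ} (hR0 : 0 < R) (hR1 : R < 1)
    {y : X} (hy0 : y ≠ 0) (hy : ‖y‖ ≤ R) {ℓ : X →L[ℂ] ℂ} (hℓ : ℓ ∈ normingFunctionals y)
    {ε : ℝ} (hεb : ‖ContinuousLinearMap.id ℂ X - fderiv ℂ g 0‖ ≤ ε) :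
    ‖ℓ (y - g y)‖ ≤ 2 / (1 - R) * ε := by
  obtain ⟨hℓy, hℓn⟩ := hℓ
  have hεnn : 0 ≤ ε := le_trans (norm_nonneg _) hεb
  have hyn : (0:ℝ) < ‖y‖ := norm_pos_iff.mpr hy0
  set u : X := ‖y‖⁻¹ • y with hu
  have hun : ‖u‖ = 1 := by
    rw [hu, norm_smul, norm_inv, norm_norm, inv_mul_cancel₀ hyn.ne']
  have hcs : ((‖y‖:ℂ)) • u = y := by
    rw [hu, ← Complex.coe_smul, smul_smul]
    have hmul : ((‖y‖:ℂ)) * ((‖y‖⁻¹:ℝ):ℂ) = 1 := by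
      norm_cast
      exact mul_inv_cancel₀ hyn.ne'
    rw [hmul, one_smul]
  have hℓu : ℓ u = 1 := by
    rw [hu, ← Complex.coe_smul, map_smul, smul_eq_mul, hℓy]
    norm_cast
    exact inv_mul_cancel₀ hyn.ne'
  have hmap : ∀ l : ℂ, l ∈ ball (0:ℂ) 1 → (l • u) ∈ ball (0:X) 1 := by
    intro l hl
    simp only [mem_ball, dist_zero_right] at hl ⊢
    rw [norm_smul, hun, mul_one]; exact hl
  set F : ℂ → ℂ := fun l => ℓ ((l • u) - g (l • u)) with hF
  have hF0 : F 0 = 0 := by simp [hF, h0]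
  have hdF : DifferentiableOn ℂ F (ball 0 1) := by
    apply ℓ.differentiable.comp_differentiableOn
    exact ((line_diff u).differentiableOn).sub (hd.comp ((line_diff u).differentiableOn) hmap)
  have hFval : ∀ l : ℂ, F l = l - ℓ (g (l • u)) := by
    intro l
    rw [hF]
    simp only [map_sub, map_smul, hℓu, smul_eq_mul, mul_one]
  set φ : ℂ → ℂ := dslope F 0 with hφ
  have hdφ : DifferentiableOn ℂ φ (ball 0 1) :=
    (Complex.differentiableOn_dslope (ball_mem_nhds _ one_pos)).mpr hdF
  have hg0 : DifferentiableAt ℂ g 0 := hd.differentiableAt (ball_mem_nhds _ one_pos)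
  have hinner : HasDerivAt (fun l : ℂ => l • u) u 0 := by
    simpa using (hasDerivAt_id (0:ℂ)).smul_const u
  have hcomp : HasDerivAt (fun l : ℂ => g (l • u)) (fderiv ℂ g 0 u) 0 := by
    have h1 : HasFDerivAt g (fderiv ℂ g 0) ((0:ℂ) • u) := by
      rw [zero_smul]; exact hg0.hasFDerivAt
    have := h1.comp_hasDerivAt (0:ℂ) hinner
    exact this
  have hφ0 : φ 0 = ℓ (u - fderiv ℂ g 0 u) := by
    have h2 : HasDerivAt (fun l : ℂ => (l • u) - g (l • u)) (u - fderiv ℂ g 0 u) 0 :=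
      hinner.sub hcomp
    have hdF0 : HasDerivAt F (ℓ (u - fderiv ℂ g 0 u)) 0 := by
      have := (ℓ.hasFDerivAt).comp_hasDerivAt (0:ℂ) h2
      exact this
    rw [hφ, dslope_same]
    exact hdF0.deriv
  have hφ0b : ‖φ 0‖ ≤ ε := by
    rw [hφ0]
    have h3 : u - fderiv ℂ g 0 u = (ContinuousLinearMap.id ℂ X - fderiv ℂ g 0) u := by simp
    rw [h3]
    calc ‖ℓ ((ContinuousLinearMap.id ℂ X - fderiv ℂ g 0) u)‖
        ≤ ‖ℓ‖ * ‖(ContinuousLinearMap.id ℂ X - fderiv ℂ g 0) u‖ := ℓ.le_opNorm _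
    _ ≤ 1 * (‖ContinuousLinearMap.id ℂ X - fderiv ℂ g 0‖ * ‖u‖) := by
        rw [hℓn]
        exact mul_le_mul_of_nonneg_left
          ((ContinuousLinearMap.id ℂ X - fderiv ℂ g 0).le_opNorm u) zero_le_one
    _ = ‖ContinuousLinearMap.id ℂ X - fderiv ℂ g 0‖ := by rw [hun]; ring
    _ ≤ ε := hεb
  have hpos : ∀ l ∈ ball (0:ℂ) 1, 0 ≤ (φ l).re := by
    have hposne : ∀ l ∈ ball (0:ℂ) 1, l ≠ 0 → 0 ≤ (φ l).re := by
      intro l hl hl0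
      rw [hφ, dslope_of_ne _ hl0, slope_def_field, hF0, sub_zero, sub_zero, hFval]
      have hgb : ‖g (l • u)‖ ≤ ‖l • u‖ := schwarz_vec hd hm h0 (hmap l hl)
      have hlu : ‖l • u‖ = ‖l‖ := by rw [norm_smul, hun, mul_one]
      have hl0' : (0:ℝ) < ‖l‖ := norm_pos_iff.mpr hl0
      have hql : ‖ℓ (g (l • u)) / l‖ ≤ 1 := by
        rw [norm_div, div_le_one hl0']
        calc ‖ℓ (g (l • u))‖ ≤ ‖ℓ‖ * ‖g (l • u)‖ := ℓ.le_opNorm _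
        _ ≤ 1 * ‖l‖ := by rw [hℓn]; rw [hlu] at hgb; linarith [hgb]
        _ = ‖l‖ := one_mul _
      have h4 : (l - ℓ (g (l • u))) / l = 1 - ℓ (g (l • u)) / l := by
        field_simp
      rw [h4]
      have h5 := Complex.abs_re_le_norm (ℓ (g (l • u)) / l)
      have h6 : (1 - ℓ (g (l • u)) / l).re = 1 - (ℓ (g (l • u)) / l).re := by
        simp [Complex.sub_re]
      rw [h6]
      have h7 : (ℓ (g (l • u)) / l).re ≤ 1 := le_trans (le_trans (le_abs_self _) h5) hql
      linarith
    intro l hl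
    rcases eq_or_ne l 0 with rfl | hl0
    · have hφat : ContinuousAt φ 0 := (hdφ.differentiableAt (ball_mem_nhds _ one_pos)).continuousAt
      have htend : Filter.Tendsto (fun l => (φ l).re) (nhdsWithin 0 {(0:ℂ)}ᶜ) (nhds ((φ 0).re)) :=
        (Complex.continuous_re.continuousAt.comp hφat).tendsto.mono_left nhdsWithin_le_nhds
      refine ge_of_tendsto htend ?_
      filter_upwards [self_mem_nhdsWithin,
        mem_nhdsWithin_of_mem_nhds (ball_mem_nhds (0:ℂ) one_pos)] with l hl1 hl2
      exact hposne l hl2 hl1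
    · exact hposne l hl hl0
  have h0ball : (0:ℂ) ∈ ball (0:ℂ) 1 := by simp
  -- Caratheodory-type estimate
  have hcar : ∀ δ : ℝ, 0 < δ → ∀ l₀ ∈ ball (0:ℂ) 1,
      ‖φ l₀‖ * (1 - ‖l₀‖) ≤ ‖φ 0‖ * (1 + ‖l₀‖) + 2 * δ * ‖l₀‖ := by
    intro δ hδ l₀ hl₀
    set a : ℂ := φ 0 + δ with ha
    set den : ℂ → ℂ := fun l => φ l + ((δ:ℂ) + (starRingEnd ℂ) a) with hden
    have hre : ∀ l ∈ ball (0:ℂ) 1, (den l).re = ((φ l).re + δ) + ((φ 0).re + δ) := by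
      intro l _
      simp [hden, ha, Complex.add_re, Complex.ofReal_re, Complex.conj_re]
      ring
    have hdenre : ∀ l ∈ ball (0:ℂ) 1, 0 < (den l).re := by
      intro l hl
      rw [hre l hl]
      have h1 := hpos l hl
      have h2 := hpos 0 h0ball
      linarith
    have hdenne : ∀ l ∈ ball (0:ℂ) 1, den l ≠ 0 := by
      intro l hl h
      have := hdenre l hl
      rw [h] at this
      simp at this
    set ψ : ℂ → ℂ := fun l => (φ l - φ 0) / den l with hψ
    have hdψ : DifferentiableOn ℂ ψ (ball 0 1) := by
      apply DifferentiableOn.div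
      · exact hdφ.sub (differentiableOn_const _)
      · exact hdφ.add (differentiableOn_const _)
      · exact hdenne
    have hψ0 : ψ 0 = 0 := by simp [hψ]
    -- strict bound |ψ l| < 1
    have hψlt : ∀ l ∈ ball (0:ℂ) 1, ‖ψ l‖ < 1 := by
      intro l hl
      have hkey : Complex.normSq (φ l - φ 0)
          = Complex.normSq (den l) - 4 * ((φ l).re + δ) * ((φ 0).re + δ) := by
        have : den l = (φ l + (δ:ℂ)) + (starRingEnd ℂ) (φ 0 + (δ:ℂ)) := by
          rw [hden, ha]; ring_nf
        rw [this]
        simp only [Complex.normSq_apply, Complex.sub_re, Complex.sub_im, Complex.add_re,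
          Complex.add_im, Complex.conj_re, Complex.conj_im, Complex.ofReal_re, Complex.ofReal_im]
        ring
      have hnum_lt : Complex.normSq (φ l - φ 0) < Complex.normSq (den l) := by
        rw [hkey]
        have h1 := hpos l hl
        have h2 := hpos 0 h0ball
        nlinarith
      have habs : ‖φ l - φ 0‖ < ‖den l‖ := by
        rw [Complex.norm_def, Complex.norm_def]
        exact Real.sqrt_lt_sqrt (Complex.normSq_nonneg _) hnum_lt
      rw [hψ]
      rw [norm_div, div_lt_one (lt_of_le_of_lt (norm_nonneg _) habs)]
      exact habs
    have hmψ : MapsTo ψ (ball (0:ℂ) 1) (ball (ψ 0) 1) := by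
      intro l hl
      rw [hψ0, mem_ball, dist_zero_right]
      exact hψlt l hl
    have hsch := Complex.dist_le_div_mul_dist_of_mapsTo_ball hdψ (hmψ.mono_right ball_subset_closedBall) hl₀
    rw [hψ0, dist_zero_right, dist_zero_right, div_one, one_mul] at hsch
    -- reconstruct
    have hfac : φ l₀ - φ 0 = ψ l₀ * den l₀ := by
      rw [hψ, div_mul_cancel₀]
      exact hdenne l₀ hl₀
    have hdenb : ‖den l₀‖ ≤ ‖φ l₀‖ + δ + (‖φ 0‖ + δ) := by
      calc ‖den l₀‖ ≤ ‖φ l₀‖ + ‖(δ:ℂ) + (starRingEnd ℂ) a‖ := norm_add_le _ _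
      _ ≤ ‖φ l₀‖ + (‖(δ:ℂ)‖ + ‖(starRingEnd ℂ) a‖) := by
          have := norm_add_le ((δ:ℂ)) ((starRingEnd ℂ) a)
          linarith
      _ ≤ ‖φ l₀‖ + δ + (‖φ 0‖ + δ) := by
          have h1 : ‖(δ:ℂ)‖ = δ := by
            rw [Complex.norm_real, Real.norm_eq_abs, abs_of_pos hδ]
          have h2 : ‖(starRingEnd ℂ) a‖ = ‖a‖ := RCLike.norm_conj _
          have h3 : ‖a‖ ≤ ‖φ 0‖ + δ := by
            rw [ha]
            calc ‖φ 0 + (δ:ℂ)‖ ≤ ‖φ 0‖ + ‖(δ:ℂ)‖ := norm_add_le _ _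
            _ = ‖φ 0‖ + δ := by rw [h1]
          rw [h1, h2]
          linarith
    have h8 : ‖φ l₀‖ - ‖φ 0‖ ≤ ‖φ l₀ - φ 0‖ := by
      have := norm_sub_norm_le (φ l₀) (φ 0)
      linarith
    have h9 : ‖φ l₀ - φ 0‖ ≤ ‖l₀‖ * (‖φ l₀‖ + δ + (‖φ 0‖ + δ)) := by
      rw [hfac, norm_mul]
      exact mul_le_mul hsch hdenb (norm_nonneg _) (norm_nonneg _)
    have hl₀1 : ‖l₀‖ < 1 := by simpa [mem_ball, dist_zero_right] using hl₀
    nlinarith [norm_nonneg l₀, norm_nonneg (φ l₀), norm_nonneg (φ 0)]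
  -- conclude at l₀ = ‖y‖
  have hyb : ((‖y‖:ℂ)) ∈ ball (0:ℂ) 1 := by
    simp only [mem_ball, dist_zero_right, Complex.norm_real, norm_norm]
    exact lt_of_le_of_lt hy hR1
  have hl₀norm : ‖((‖y‖:ℂ))‖ = ‖y‖ := by
    rw [Complex.norm_real, norm_norm]
  have hFl₀ : F ((‖y‖:ℂ)) = ℓ (y - g y) := by
    rw [hF]
    simp only [hcs]
  have hφl₀ : ‖ℓ (y - g y)‖ = ‖φ ((‖y‖:ℂ))‖ * ‖y‖ := by
    have hne : ((‖y‖:ℂ)) ≠ 0 := by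
      simp only [ne_eq, Complex.ofReal_eq_zero]
      exact hyn.ne'
    rw [hφ, dslope_of_ne _ hne, slope_def_field, hF0, sub_zero, sub_zero, hFl₀, norm_div,
      hl₀norm, div_mul_cancel₀]
    exact hyn.ne'
  -- final inequality via δ → 0
  have hfinal : ∀ κ : ℝ, 0 < κ → ‖ℓ (y - g y)‖ ≤ 2 / (1 - R) * ε + κ := by
    intro κ hκ
    set δ : ℝ := κ * (1 - R) / 4 with hδdef
    have hδ : 0 < δ := by
      apply div_pos
      · exact mul_pos hκ (by linarith)
      · norm_num
    have hcar' := hcar δ hδ ((‖y‖:ℂ)) hyb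
    rw [hl₀norm] at hcar'
    have h1R : (0:ℝ) < 1 - R := by linarith
    have h1y : (0:ℝ) < 1 - ‖y‖ := by linarith [lt_of_le_of_lt hy hR1]
    -- ‖φ l₀‖ (1 - ‖y‖) ≤ ε (1 + ‖y‖) + 2δ‖y‖
    have h2 : ‖φ ((‖y‖:ℂ))‖ * (1 - ‖y‖) ≤ ε * (1 + ‖y‖) + 2 * δ * ‖y‖ := by
      calc ‖φ ((‖y‖:ℂ))‖ * (1 - ‖y‖) ≤ ‖φ 0‖ * (1 + ‖y‖) + 2 * δ * ‖y‖ := hcar'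
      _ ≤ ε * (1 + ‖y‖) + 2 * δ * ‖y‖ := by
          have : ‖φ 0‖ * (1 + ‖y‖) ≤ ε * (1 + ‖y‖) :=
            mul_le_mul_of_nonneg_right hφ0b (by linarith [norm_nonneg y])
          linarith
    -- multiply out
    have h3 : ‖ℓ (y - g y)‖ * (1 - ‖y‖) ≤ ‖y‖ * (ε * (1 + ‖y‖) + 2 * δ * ‖y‖) := by
      rw [hφl₀]
      calc ‖φ ((‖y‖:ℂ))‖ * ‖y‖ * (1 - ‖y‖) = ‖y‖ * (‖φ ((‖y‖:ℂ))‖ * (1 - ‖y‖)) := by ring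
      _ ≤ ‖y‖ * (ε * (1 + ‖y‖) + 2 * δ * ‖y‖) := by
          apply mul_le_mul_of_nonneg_left h2 (norm_nonneg y)
    have h4 : ‖ℓ (y - g y)‖ * (1 - R) ≤ ‖ℓ (y - g y)‖ * (1 - ‖y‖) :=
      mul_le_mul_of_nonneg_left (by linarith only [hy] : (1:ℝ) - R ≤ 1 - ‖y‖)
        (norm_nonneg (ℓ (y - g y)))
    have h5 : ‖y‖ * (ε * (1 + ‖y‖) + 2 * δ * ‖y‖) ≤ R * (ε * (1 + R) + 2 * δ * R) := by
      have hynn := norm_nonneg y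
      have hx2 : ‖y‖ * ‖y‖ ≤ R * R := mul_self_le_mul_self hynn hy
      have f1 : ε * ‖y‖ ≤ ε * R := mul_le_mul_of_nonneg_left hy hεnn
      have f2 : ε * (‖y‖ * ‖y‖) ≤ ε * (R * R) := mul_le_mul_of_nonneg_left hx2 hεnn
      have f3 : δ * (‖y‖ * ‖y‖) ≤ δ * (R * R) := mul_le_mul_of_nonneg_left hx2 hδ.le
      linarith only [f1, f2, f3]
    have h6 : ‖ℓ (y - g y)‖ ≤ (R * (ε * (1 + R) + 2 * δ * R)) / (1 - R) := by
      rw [le_div_iff₀ h1R]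
      linarith only [h3, h4, h5]
    have h7 : (R * (ε * (1 + R) + 2 * δ * R)) / (1 - R) ≤ 2 / (1 - R) * ε + κ := by
      rw [div_le_iff₀ h1R]
      have hRR : R * R ≤ 1 := by nlinarith only [hR0.le, hR1.le]
      have e1 : R * (1 + R) ≤ 2 := by nlinarith only [hRR, hR1.le]
      have e2 : R * (ε * (1 + R)) ≤ 2 * ε := by nlinarith only [e1, hεnn, hR0.le]
      have e3 : R * (2 * δ * R) ≤ κ * (1 - R) := by
        rw [hδdef]
        have t1 : 0 < κ * (1 - R) := mul_pos hκ h1R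
        nlinarith only [t1, hRR]
      have e4 : (2 / (1 - R) * ε + κ) * (1 - R) = 2 * ε + κ * (1 - R) := by
        field_simp
      have e5 : R * (ε * (1 + R) + 2 * δ * R) = R * (ε * (1 + R)) + R * (2 * δ * R) := by
        ring
      rw [e4]
      linarith only [e2, e3, e5]
    linarith only [h6, h7]
  have := le_of_forall_pos_le_add hfinal
  linarith only [this]

lemma euler_step {g : X → X} (hd : DifferentiableOn ℂ g (ball 0 1))
    (hm : MapsTo g (ball (0:X) 1) (ball 0 1)) (h0 : g 0 = 0)
    {R : ℝ} (hR0 : 0 < R) (hR1 : R < 1)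
    {ν : ℝ} (hν0 : 0 ≤ ν)
    (hν : ∀ y : X, y ≠ 0 → ‖y‖ ≤ R → ∀ ℓ ∈ normingFunctionals y, ‖ℓ (y - g y)‖ ≤ ν)
    {x : X} {w : ℂ} (hxw : ‖x‖ + 2 * ‖w‖ ≤ R) (hw : 2 * ‖w‖ < 1 - R) :
    ‖x + w • (x - g x)‖ ≤ ‖x‖ + ‖w‖ * ν + ‖w‖ ^ 2 * (2 * (5 / (1 - R))) := by
  set L : ℝ := 5 / (1 - R) with hL
  have hL0 : 0 ≤ L := by
    rw [hL]
    apply div_nonneg (by norm_num)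
    linarith
  have hwn : (0:ℝ) ≤ ‖w‖ := norm_nonneg w
  have hxR : ‖x‖ ≤ R := by linarith
  have hxb : x ∈ ball (0:X) 1 := by
    simp only [mem_ball, dist_zero_right]; linarith
  have hhd : DifferentiableOn ℂ (fun y : X => y - g y) (ball 0 1) :=
    (differentiable_id.differentiableOn).sub hd
  have hbd : ∀ y ∈ ball (0:X) 1, ‖y - g y‖ ≤ 2 := by
    intro y hy
    have h1 : ‖y‖ < 1 := by simpa [mem_ball, dist_zero_right] using hy
    have h2 := schwarz_vec hd hm h0 hy
    calc ‖y - g y‖ ≤ ‖y‖ + ‖g y‖ := norm_sub_le _ _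
    _ ≤ 2 := by linarith
  have hhx2 : ‖x - g x‖ ≤ 2 := hbd x hxb
  rcases eq_or_ne (w • (x - g x)) 0 with hwh | hwh
  · rw [hwh, add_zero]
    have : (0:ℝ) ≤ ‖w‖ * ν + ‖w‖ ^ 2 * (2 * L) := by positivity
    linarith
  set z := x + w • (x - g x) with hz
  rcases eq_or_ne z 0 with hz0 | hz0
  · rw [hz0, norm_zero]
    have h1 : (0:ℝ) ≤ ‖w‖ * ν + ‖w‖ ^ 2 * (2 * L) := by positivity
    linarith [norm_nonneg x]
  obtain ⟨ℓ, hℓn, hℓz⟩ := exists_dual_vector ℂ z (norm_ne_zero_iff.mpr hz0)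
  -- t and e
  set t : ℝ := ‖w • (x - g x)‖ with ht
  have ht0 : 0 < t := norm_pos_iff.mpr hwh
  have htw : t ≤ 2 * ‖w‖ := by
    rw [ht, norm_smul]
    nlinarith only [hhx2, hwn]
  set e : X := t⁻¹ • (w • (x - g x)) with he
  have hen : ‖e‖ = 1 := by
    rw [he, norm_smul, norm_inv, Real.norm_eq_abs, abs_of_pos ht0, ← ht,
      inv_mul_cancel₀ ht0.ne']
  have hte : z = x + t • e := by
    rw [he, hz, smul_smul, mul_inv_cancel₀ ht0.ne', one_smul]
  -- norming bound at z
  have hzR : ‖z‖ ≤ R := by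
    rw [hz]
    calc ‖x + w • (x - g x)‖ ≤ ‖x‖ + ‖w • (x - g x)‖ := norm_add_le _ _
    _ ≤ ‖x‖ + 2 * ‖w‖ := by rw [← ht]; linarith
    _ ≤ R := hxw
  have hℓmem : ℓ ∈ normingFunctionals z := ⟨hℓz, hℓn⟩
  have hνz : ‖ℓ (z - g z)‖ ≤ ν := hν z hz0 hzR ℓ hℓmem
  -- lipschitz along the slice
  have hlip : ‖ℓ (z - g z) - ℓ (x - g x)‖ ≤ L * t := by
    have := scalar_slice_lip hhd hbd hR1 ℓ hℓn hen hxR ht0.le (lt_of_le_of_lt htw hw)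
    rw [← hte] at this
    exact this
  have hℓhx : ‖ℓ (x - g x)‖ ≤ ν + L * t := by
    calc ‖ℓ (x - g x)‖ = ‖ℓ (z - g z) - (ℓ (z - g z) - ℓ (x - g x))‖ := by
          rw [sub_sub_cancel]
    _ ≤ ‖ℓ (z - g z)‖ + ‖ℓ (z - g z) - ℓ (x - g x)‖ := norm_sub_le _ _
    _ ≤ ν + L * t := add_le_add hνz hlip
  -- main estimate
  have hmain : ‖z‖ ≤ ‖x‖ + ‖w‖ * (ν + L * t) := by
    have h1 : ℓ z = ℓ x + w * ℓ (x - g x) := by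
      rw [hz]
      simp [map_add, map_smul, smul_eq_mul]
    have h1' : (ℓ z).re = ‖z‖ := by rw [hℓz]; norm_num
    have h2 : ‖z‖ = (ℓ x).re + (w * ℓ (x - g x)).re := by
      rw [← h1']
      rw [h1, Complex.add_re]
    have h3 : (ℓ x).re ≤ ‖x‖ := by
      calc (ℓ x).re ≤ ‖ℓ x‖ := Complex.re_le_norm _
      _ ≤ ‖ℓ‖ * ‖x‖ := ℓ.le_opNorm x
      _ = ‖x‖ := by rw [hℓn, one_mul]
    have h4 : (w * ℓ (x - g x)).re ≤ ‖w‖ * (ν + L * t) := by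
      calc (w * ℓ (x - g x)).re ≤ ‖w * ℓ (x - g x)‖ := Complex.re_le_norm _
      _ = ‖w‖ * ‖ℓ (x - g x)‖ := by rw [norm_mul]
      _ ≤ ‖w‖ * (ν + L * t) := mul_le_mul_of_nonneg_left hℓhx hwn
    linarith
  calc ‖z‖ ≤ ‖x‖ + ‖w‖ * (ν + L * t) := hmain
  _ ≤ ‖x‖ + ‖w‖ * ν + ‖w‖ ^ 2 * (2 * L) := by
      have h5 : ‖w‖ * (L * t) ≤ ‖w‖ ^ 2 * (2 * L) := by
        have : ‖w‖ * (L * t) ≤ ‖w‖ * (L * (2 * ‖w‖)) :=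
          mul_le_mul_of_nonneg_left (mul_le_mul_of_nonneg_left htw hL0) hwn
        nlinarith only [this, hwn, hL0]
      have h6 : ‖w‖ * (ν + L * t) = ‖w‖ * ν + ‖w‖ * (L * t) := by ring
      linarith

/-- Euler polygon iteration used in the proof of the key rigidity lemma. -/
def eulerP (g : X → X) (x₀ : X) (c : ℂ) : ℕ → ℂ → X
  | 0 => fun _ => x₀
  | (k+1) => fun ζ =>
      eulerP g x₀ c k ζ + (ζ * c) • (eulerP g x₀ c k ζ - g (eulerP g x₀ c k ζ))

lemma keyLemma {g : X → X} (hd : DifferentiableOn ℂ g (ball 0 1))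
    (hm : MapsTo g (ball (0:X) 1) (ball 0 1)) (h0 : g 0 = 0)
    {r R : ℝ} (hr0 : 0 < r) (hrR : r < R) (hR1 : R < 1)
    {ν : ℝ} (hν0 : 0 < ν)
    (hν : ∀ y : X, y ≠ 0 → ‖y‖ ≤ R → ∀ ℓ ∈ normingFunctionals y, ‖ℓ (y - g y)‖ ≤ ν)
    {x₀ : X} (hx₀ : ‖x₀‖ ≤ r) :
    ‖x₀ - g x₀‖ ≤ 4 * ν / (R - r) := by
  have hR0 : (0:ℝ) < R := lt_trans hr0 hrR
  have hgap0 : 0 < R - r := by linarith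
  have h1R : (0:ℝ) < 1 - R := by linarith
  set L : ℝ := 5 / (1 - R) with hL
  have hL0 : 0 < L := by rw [hL]; positivity
  set ρ : ℝ := (R - r) / (2 * ν) with hρ
  have hρ0 : 0 < ρ := by rw [hρ]; positivity
  obtain ⟨n, hn⟩ := exists_nat_ge (8 * ρ * (L * ρ + 1) / (R - r) + 2 * ρ / (1 - R) + 1)
  have hterms : 0 ≤ 8 * ρ * (L * ρ + 1) / (R - r) := by positivity
  have hterms2 : 0 ≤ 2 * ρ / (1 - R) := by positivity
  have hn0 : (0:ℝ) < (n:ℝ) := by linarith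
  have hnne : (n:ℂ) ≠ 0 := by
    simp only [ne_eq, Nat.cast_eq_zero]
    rintro rfl
    simp at hn0
  set w₀ : ℝ := ρ / n with hw₀
  have hw₀0 : 0 < w₀ := by rw [hw₀]; positivity
  have fA : (n:ℝ) * w₀ = ρ := by rw [hw₀]; field_simp
  have fB : 2 * w₀ < 1 - R := by
    have hb1 : 2 * ρ / (1 - R) < (n:ℝ) := by linarith
    rw [div_lt_iff₀ h1R] at hb1
    rw [hw₀]
    have hb2 : 2 * (ρ / n) = 2 * ρ / n := by ring
    rw [hb2, div_lt_iff₀ hn0]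
    linarith
  set A : ℝ := w₀ * (ν + 2 * L * w₀) with hA
  have hA0 : 0 < A := by rw [hA]; positivity
  have fC : r + (n:ℝ) * A + 2 * w₀ ≤ R := by
    have hc1 : 8 * ρ * (L * ρ + 1) / (R - r) ≤ (n:ℝ) := by linarith
    rw [div_le_iff₀ hgap0] at hc1
    have q1 : (n:ℝ) * A = ρ * ν + 2 * L * ρ * w₀ := by
      rw [hA]
      calc (n:ℝ) * (w₀ * (ν + 2 * L * w₀)) = ((n:ℝ) * w₀) * ν + 2 * L * (((n:ℝ) * w₀) * w₀) := by
            ring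
      _ = ρ * ν + 2 * L * ρ * w₀ := by rw [fA]; ring
    have q2 : ρ * ν = (R - r) / 2 := by
      rw [hρ]; field_simp
    have q3 : 2 * L * ρ * w₀ ≤ (R - r) / 4 := by
      rw [hw₀]
      have e : 2 * L * ρ * (ρ / n) = 2 * L * ρ * ρ / n := by ring
      rw [e, div_le_div_iff₀ hn0 (by norm_num : (0:ℝ) < 4)]
      nlinarith only [hc1, hρ0.le, hL0.le]
    have q4 : 2 * w₀ ≤ (R - r) / 4 := by
      rw [hw₀]
      have e : 2 * (ρ / n) = 2 * ρ / n := by ring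
      rw [e, div_le_div_iff₀ hn0 (by norm_num : (0:ℝ) < 4)]
      nlinarith only [hc1, hρ0.le, hL0.le, mul_nonneg (mul_nonneg hL0.le hρ0.le) hρ0.le]
    linarith
  have frn : r + (n:ℝ) * A < 1 := by linarith
  set c : ℂ := (n:ℂ)⁻¹ with hc
  set P : ℕ → ℂ → X := eulerP g x₀ c with hP
  have hPsucc : ∀ k (ζ : ℂ), P (k+1) ζ = P k ζ + (ζ * c) • (P k ζ - g (P k ζ)) := by
    intro k ζ; rw [hP]; rfl
  have hP0 : ∀ ζ : ℂ, P 0 ζ = x₀ := fun ζ => rfl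
  have hcnorm : ‖c‖ = ((n:ℝ))⁻¹ := by
    rw [hc, norm_inv, Complex.norm_natCast]
  -- main induction: norm bound and differentiability
  have main : ∀ k : ℕ, k ≤ n →
      (∀ ζ : ℂ, ‖ζ‖ ≤ ρ → ‖P k ζ‖ ≤ r + (k:ℝ) * A) ∧
        DifferentiableOn ℂ (P k) (ball 0 ρ) := by
    intro k
    induction k with
    | zero =>
      intro _
      constructor
      · intro ζ _
        rw [hP0]
        simp only [Nat.cast_zero, zero_mul, add_zero]
        exact hx₀
      · exact differentiableOn_const x₀
    | succ k ih =>
      intro hk1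
      obtain ⟨ih1, ih2⟩ := ih (le_of_lt (Nat.lt_of_succ_le hk1))
      have hkn : (k:ℝ) ≤ (n:ℝ) := by exact_mod_cast le_of_lt (Nat.lt_of_succ_le hk1)
      have hboundk : ∀ ζ : ℂ, ‖ζ‖ ≤ ρ → ‖P k ζ‖ ≤ r + (n:ℝ) * A := by
        intro ζ hζ
        calc ‖P k ζ‖ ≤ r + (k:ℝ) * A := ih1 ζ hζ
        _ ≤ r + (n:ℝ) * A := by nlinarith only [hkn, hA0.le]
      have hmapsk : MapsTo (P k) (ball (0:ℂ) ρ) (ball (0:X) 1) := by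
        intro ζ hζ
        simp only [mem_ball, dist_zero_right] at hζ ⊢
        exact lt_of_le_of_lt (hboundk ζ hζ.le) frn
      constructor
      · intro ζ hζ
        rw [hPsucc]
        set x := P k ζ with hx
        set w : ℂ := ζ * c with hwdef
        have hwb : ‖w‖ ≤ w₀ := by
          rw [hwdef, norm_mul, hcnorm, hw₀]
          rw [div_eq_mul_inv ρ]
          exact mul_le_mul_of_nonneg_right hζ (by positivity)
        have hxb : ‖x‖ ≤ r + (k:ℝ) * A := ih1 ζ hζ
        have hxw : ‖x‖ + 2 * ‖w‖ ≤ R := by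
          have : ‖x‖ ≤ r + (n:ℝ) * A := by
            calc ‖x‖ ≤ r + (k:ℝ) * A := hxb
            _ ≤ r + (n:ℝ) * A := by nlinarith only [hkn, hA0.le]
          linarith [fC, hwb]
        have hww : 2 * ‖w‖ < 1 - R := by linarith [fB, hwb]
        have hstep := euler_step hd hm h0 hR0 hR1 hν0.le hν hxw hww
        have hb1 : ‖w‖ * ν ≤ w₀ * ν := mul_le_mul_of_nonneg_right hwb hν0.le
        have hb2 : ‖w‖ ^ 2 * (2 * (5 / (1 - R))) ≤ w₀ ^ 2 * (2 * L) := by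
          rw [← hL]
          have h1 : ‖w‖ ^ 2 ≤ w₀ ^ 2 := by
            have := norm_nonneg w
            nlinarith only [hwb, this]
          exact mul_le_mul_of_nonneg_right h1 (by positivity)
        have harith : r + (k:ℝ) * A + (w₀ * ν + w₀ ^ 2 * (2 * L)) = r + ((k:ℝ) + 1) * A := by
          rw [hA]; ring
        calc ‖x + w • (x - g x)‖ ≤ ‖x‖ + ‖w‖ * ν + ‖w‖ ^ 2 * (2 * (5 / (1 - R))) := hstep
        _ ≤ (r + (k:ℝ) * A) + (w₀ * ν + w₀ ^ 2 * (2 * L)) := by linarith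
        _ = r + ((k:ℝ) + 1) * A := harith
        _ = r + ((k+1 : ℕ):ℝ) * A := by push_cast; ring
      · intro ζ hζ
        have hdsucc : DifferentiableOn ℂ
            (fun ζ => P k ζ + (ζ * c) • (P k ζ - g (P k ζ))) (ball 0 ρ) := by
          apply ih2.add
          apply DifferentiableOn.smul
          · exact (differentiable_id.mul_const c).differentiableOn
          · exact ih2.sub (hd.comp ih2 hmapsk)
        have : (fun ζ => P k ζ + (ζ * c) • (P k ζ - g (P k ζ))) = P (k+1) := by
          funext ζ; rw [hPsucc]
        rw [← this]
        exact hdsucc ζ hζ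
  -- value at 0
  have hval0 : ∀ k : ℕ, P k 0 = x₀ := by
    intro k
    induction k with
    | zero => exact hP0 0
    | succ k ih => rw [hPsucc, ih]; simp
  -- derivative at 0
  have hder : ∀ k : ℕ, k ≤ n → HasDerivAt (P k) (((k:ℂ) * c) • (x₀ - g x₀)) 0 := by
    intro k
    induction k with
    | zero =>
      intro _
      have : (((0:ℕ):ℂ) * c) • (x₀ - g x₀) = 0 := by simp
      rw [this]
      have h1 : P 0 = fun _ : ℂ => x₀ := by funext ζ; exact hP0 ζ
      rw [h1]
      exact hasDerivAt_const 0 x₀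
    | succ k ih =>
      intro hk1
      have hkn := le_of_lt (Nat.lt_of_succ_le hk1)
      have ihd := ih hkn
      have hPk0 : P k 0 = x₀ := hval0 k
      have hdiffPk : DifferentiableAt ℂ (P k) 0 :=
        (main k hkn).2.differentiableAt (ball_mem_nhds _ hρ0)
      have hx₀ball : x₀ ∈ ball (0:X) 1 := by
        simp only [mem_ball, dist_zero_right]; linarith
      have hgd : DifferentiableAt ℂ g (P k 0) := by
        rw [hPk0]
        exact hd.differentiableAt (isOpen_ball.mem_nhds hx₀ball)
      have hHk : DifferentiableAt ℂ (fun ζ => P k ζ - g (P k ζ)) 0 :=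
        hdiffPk.sub (hgd.comp 0 hdiffPk)
      have hcd : HasDerivAt (fun ζ : ℂ => ζ * c) c 0 := by
        simpa using (hasDerivAt_id (0:ℂ)).mul_const c
      have hsm := hcd.smul hHk.hasDerivAt
      simp only [zero_mul, zero_smul, zero_add] at hsm
      -- hsm : HasDerivAt (fun ζ => (ζ * c) • (P k ζ - g (P k ζ))) (c • (P k 0 - g (P k 0))) 0
      rw [hPk0] at hsm
      have hsum := ihd.add hsm
      have hfun : (fun ζ => P k ζ + (ζ * c) • (P k ζ - g (P k ζ))) = P (k+1) := by
        funext ζ; rw [hPsucc]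
      rw [← hfun]
      have hvv : ((k:ℂ) * c) • (x₀ - g x₀) + c • (x₀ - g x₀)
          = (((k+1:ℕ):ℂ) * c) • (x₀ - g x₀) := by
        rw [← add_smul]
        congr 1
        push_cast
        ring
      rw [← hvv]
      exact hsum
  -- conclude via the Schwarz lemma
  have hdn := hder n le_rfl
  have hval : ((n:ℂ) * c) • (x₀ - g x₀) = x₀ - g x₀ := by
    rw [hc, mul_inv_cancel₀ hnne, one_smul]
  rw [hval] at hdn
  have hderiv : deriv (P n) 0 = x₀ - g x₀ := hdn.deriv
  have hmaps2 : MapsTo (P n) (ball (0:ℂ) ρ) (ball (P n 0) 2) := by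
    intro ζ hζ
    rw [mem_ball, hval0 n, dist_eq_norm]
    have h1 : ‖P n ζ‖ ≤ r + (n:ℝ) * A := by
      apply (main n le_rfl).1 ζ
      simp only [mem_ball, dist_zero_right] at hζ
      exact hζ.le
    calc ‖P n ζ - x₀‖ ≤ ‖P n ζ‖ + ‖x₀‖ := norm_sub_le _ _
    _ ≤ (r + (n:ℝ) * A) + r := by linarith
    _ < 2 := by linarith
  have hS := Complex.norm_deriv_le_div_of_mapsTo_ball (main n le_rfl).2 (hmaps2.mono_right ball_subset_closedBall) hρ0
  rw [hderiv] at hS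
  calc ‖x₀ - g x₀‖ ≤ 2 / ρ := hS
  _ = 4 * ν / (R - r) := by
      rw [hρ]
      field_simp
      ring


end Aux

-- exp bound in a Banach algebra
lemma exp_sub_one_norm {B : Type*} [NormedRing B] [NormedAlgebra ℂ B] [CompleteSpace B]
    (x : B) : ‖NormedSpace.exp x - 1‖ ≤ Real.exp ‖x‖ - 1 := by
  have hsum : Summable (fun n : ℕ => ((Nat.factorial n : ℝ)⁻¹) * ‖x‖ ^ n) := by
    have := Real.summable_pow_div_factorial ‖x‖
    simpa [div_eq_mul_inv, mul_comm] using this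
  have hsumv : Summable (fun n : ℕ => (((Nat.factorial n : ℂ))⁻¹) • x ^ n) :=
    NormedSpace.expSeries_summable' (𝕂 := ℂ) x
  have hexp : NormedSpace.exp x = ∑' n : ℕ, (((Nat.factorial n : ℂ))⁻¹) • x ^ n := by
    rw [NormedSpace.exp_eq_tsum ℂ]
  have hsplit : NormedSpace.exp x = 1 + ∑' n : ℕ, (((Nat.factorial (n+1) : ℂ))⁻¹) • x ^ (n+1) := by
    rw [hexp, hsumv.tsum_eq_zero_add]
    norm_num
  have hre : Real.exp ‖x‖ = 1 + ∑' n : ℕ, ((Nat.factorial (n+1) : ℝ))⁻¹ * ‖x‖ ^ (n+1) := by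
    have h1 : Real.exp ‖x‖ = ∑' n : ℕ, ((Nat.factorial n : ℝ))⁻¹ * ‖x‖ ^ n := by
      rw [Real.exp_eq_exp_ℝ, NormedSpace.exp_eq_tsum ℝ]
      simp [smul_eq_mul]
    rw [h1, hsum.tsum_eq_zero_add]
    norm_num
  rw [hsplit]
  have h2 : ‖(1:B) + ∑' n : ℕ, (((Nat.factorial (n+1) : ℂ))⁻¹) • x ^ (n+1) - 1‖
      = ‖∑' n : ℕ, (((Nat.factorial (n+1) : ℂ))⁻¹) • x ^ (n+1)‖ := by
    congr 1
    abel
  rw [h2, hre]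
  have h3 : ‖∑' n : ℕ, (((Nat.factorial (n+1) : ℂ))⁻¹) • x ^ (n+1)‖
      ≤ ∑' n : ℕ, ((Nat.factorial (n+1) : ℝ))⁻¹ * ‖x‖ ^ (n+1) := by
    have hsum2 : Summable (fun n : ℕ => ((Nat.factorial (n+1) : ℝ))⁻¹ * ‖x‖ ^ (n+1)) := by
      have := (summable_nat_add_iff 1).mpr hsum
      simpa using this
    apply tsum_of_norm_bounded hsum2.hasSum
    intro n
    rw [norm_smul]
    have : ‖((Nat.factorial (n+1) : ℂ))⁻¹‖ = ((Nat.factorial (n+1) : ℝ))⁻¹ := by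
      rw [norm_inv, Complex.norm_natCast]
    rw [this]
    exact mul_le_mul_of_nonneg_left (norm_pow_le' x (Nat.succ_pos n)) (by positivity)
  linarith

lemma exp_bound_linear (t : ℝ) (ht : 0 ≤ t) : Real.exp t - 1 ≤ t * Real.exp t := by
  have h1 : 1 - t ≤ Real.exp (-t) := by
    have := Real.add_one_le_exp (-t); linarith
  have h2 : Real.exp (-t) = (Real.exp t)⁻¹ := Real.exp_neg t
  have h3 : (0:ℝ) < Real.exp t := Real.exp_pos t
  have h5 : 1 - (Real.exp t)⁻¹ ≤ t := by rw [← h2]; linarith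
  have h6 := mul_le_mul_of_nonneg_right h5 h3.le
  have h4 : (1 - (Real.exp t)⁻¹) * Real.exp t = Real.exp t - 1 := by field_simp
  rw [h4] at h6
  exact h6


theorem schwarz_family_lipschitz {X : Type*} [NormedAddCommGroup X] [NormedSpace ℂ X]
    [CompleteSpace X] (A : X →L[ℂ] X) (hm : 0 < mLower A)
    (v : ℝ → ℝ → X → X)
    (hv_schwarz : ∀ s t : ℝ, 0 ≤ s → s ≤ t → IsSchwarzMapping (v s t))
    (hv_semigroup : ∀ s t u : ℝ, 0 ≤ s → s ≤ t → t ≤ u →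
      ∀ z ∈ ball (0 : X) 1, v t u (v s t z) = v s u z)
    (hv_deriv : ∀ s t : ℝ, 0 ≤ s → s ≤ t →
      fderiv ℂ (v s t) 0 = NormedSpace.exp ((-(t - s) : ℂ) • A)) :
    ∀ r : ℝ, r ∈ Set.Ioo (0 : ℝ) 1 → ∃ M > (0 : ℝ),
      ∀ z : X, ‖z‖ ≤ r → ∀ s t₁ t₂ : ℝ, 0 ≤ s → s ≤ t₁ → t₁ < t₂ →
        ‖v s t₁ z - v s t₂ z‖ ≤ M * ‖A‖ * (t₂ - t₁) := by
  -- ‖A‖ is positive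
  have hAnorm : 0 < ‖A‖ := by
    have hS : {x | ∃ z ℓ, ‖z‖ = 1 ∧ ℓ ∈ normingFunctionals z ∧ x = (ℓ (A z)).re}.Nonempty := by
      by_contra h
      rw [Set.not_nonempty_iff_eq_empty] at h
      rw [mLower, h, Real.sInf_empty] at hm
      exact lt_irrefl 0 hm
    obtain ⟨x, z, ℓ, hz, hℓ, hx⟩ := hS
    have hbdd : BddBelow {x | ∃ z ℓ, ‖z‖ = 1 ∧ ℓ ∈ normingFunctionals z ∧ x = (ℓ (A z)).re} := by
      refine ⟨-‖A‖, ?_⟩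
      rintro x' ⟨z', ℓ', hz', hℓ', rfl⟩
      have h1 : ‖ℓ' (A z')‖ ≤ ‖A‖ := by
        calc ‖ℓ' (A z')‖ ≤ ‖ℓ'‖ * ‖A z'‖ := ℓ'.le_opNorm _
        _ ≤ 1 * (‖A‖ * ‖z'‖) := by
            rw [hℓ'.2]
            exact mul_le_mul_of_nonneg_left (A.le_opNorm z') zero_le_one
        _ = ‖A‖ := by rw [hz']; ring
      have h2 := Complex.abs_re_le_norm (ℓ' (A z'))
      have h3 := abs_le.mp (le_trans h2 h1)
      exact h3.1
    have h1 : mLower A ≤ x := csInf_le hbdd ⟨z, ℓ, hz, hℓ, hx⟩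
    have h2 : x ≤ ‖A‖ := by
      rw [hx]
      have h3 : ‖ℓ (A z)‖ ≤ ‖A‖ := by
        calc ‖ℓ (A z)‖ ≤ ‖ℓ‖ * ‖A z‖ := ℓ.le_opNorm _
        _ ≤ 1 * (‖A‖ * ‖z‖) := by
            rw [hℓ.2]
            exact mul_le_mul_of_nonneg_left (A.le_opNorm z) zero_le_one
        _ = ‖A‖ := by rw [hz]; ring
      have h4 := Complex.abs_re_le_norm (ℓ (A z))
      have h5 := abs_le.mp (le_trans h4 h3)
      exact h5.2
    linarith
  intro r hr
  obtain ⟨hr0, hr1⟩ := hr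
  set R : ℝ := (1 + r) / 2 with hRdef
  have hrR : r < R := by rw [hRdef]; linarith
  have hR1 : R < 1 := by rw [hRdef]; linarith
  have hR0 : (0:ℝ) < R := by rw [hRdef]; linarith
  have h1R : (0:ℝ) < 1 - R := by linarith
  have hgap : (0:ℝ) < R - r := by linarith
  set C : ℝ := 8 / ((1 - R) * (R - r)) * Real.exp ‖A‖ with hCdef
  have hC0 : 0 < C := by
    rw [hCdef]
    positivity
  set M : ℝ := max (2 / ‖A‖) C with hMdef
  have hM0 : 0 < M := lt_of_lt_of_le hC0 (le_max_right _ _)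
  refine ⟨M, hM0, ?_⟩
  intro z hz s t₁ t₂ hs hst₁ ht
  have hτ0 : (0:ℝ) < t₂ - t₁ := by linarith
  have hzball : z ∈ ball (0:X) 1 := by
    simp only [mem_ball, dist_zero_right]
    linarith
  obtain ⟨hd1, hm1, h01⟩ := hv_schwarz s t₁ hs hst₁
  have hst₂ : s ≤ t₂ := by linarith
  have h0t₁ : 0 ≤ t₁ := le_trans hs hst₁
  obtain ⟨hdg, hmg, h0g⟩ := hv_schwarz t₁ t₂ h0t₁ ht.le
  have hsemi : v t₁ t₂ (v s t₁ z) = v s t₂ z := hv_semigroup s t₁ t₂ hs hst₁ ht.le z hzball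
  set w := v s t₁ z with hwdef
  have hwr : ‖w‖ ≤ r := le_trans (schwarz_vec hd1 hm1 h01 hzball) hz
  have hkey : ‖v s t₁ z - v s t₂ z‖ = ‖w - v t₁ t₂ w‖ := by
    rw [← hsemi]
  rw [hkey]
  rcases le_or_gt (t₂ - t₁) 1 with hτ1 | hτ1
  · -- small time increment
    have hεb : ‖ContinuousLinearMap.id ℂ X - fderiv ℂ (v t₁ t₂) 0‖
        ≤ (t₂ - t₁) * ‖A‖ * Real.exp ((t₂ - t₁) * ‖A‖) := by
      rw [hv_deriv t₁ t₂ h0t₁ ht.le]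
      have hBnorm : ‖(-(t₂ - t₁) : ℂ) • A‖ = (t₂ - t₁) * ‖A‖ := by
        rw [norm_smul (α := ℂ) (-(t₂ - t₁) : ℂ) A]
        congr 1
        have hcast : ((-(t₂ - t₁) : ℂ)) = ((-(t₂ - t₁) : ℝ) : ℂ) := by push_cast; ring
        rw [hcast, Complex.norm_real, Real.norm_eq_abs, abs_of_nonpos (by linarith)]
        ring
      calc ‖ContinuousLinearMap.id ℂ X - NormedSpace.exp ((-(t₂ - t₁) : ℂ) • A)‖
          = ‖NormedSpace.exp ((-(t₂ - t₁) : ℂ) • A) - 1‖ := by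
            rw [norm_sub_rev, ContinuousLinearMap.one_def]
      _ ≤ Real.exp ‖(-(t₂ - t₁) : ℂ) • A‖ - 1 := exp_sub_one_norm _
      _ ≤ ‖(-(t₂ - t₁) : ℂ) • A‖ * Real.exp ‖(-(t₂ - t₁) : ℂ) • A‖ :=
            exp_bound_linear _ (norm_nonneg _)
      _ = (t₂ - t₁) * ‖A‖ * Real.exp ((t₂ - t₁) * ‖A‖) := by rw [hBnorm]
    set ν : ℝ := 2 / (1 - R) * ((t₂ - t₁) * ‖A‖ * Real.exp ((t₂ - t₁) * ‖A‖)) with hνdef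
    have hν0 : 0 < ν := by
      rw [hνdef]
      have := Real.exp_pos ((t₂ - t₁) * ‖A‖)
      positivity
    have hνnum : ∀ y : X, y ≠ 0 → ‖y‖ ≤ R → ∀ ℓ ∈ normingFunctionals y,
        ‖ℓ (y - v t₁ t₂ y)‖ ≤ ν := by
      intro y hy0 hyR ℓ hℓ
      exact lemA hdg hmg h0g hR0 hR1 hy0 hyR hℓ hεb
    have hfin := keyLemma hdg hmg h0g hr0 hrR hR1 hν0 hνnum hwr
    have hexpmono : Real.exp ((t₂ - t₁) * ‖A‖) ≤ Real.exp ‖A‖ := by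
      apply Real.exp_le_exp.mpr
      nlinarith only [hτ1, hAnorm.le, hτ0.le]
    calc ‖w - v t₁ t₂ w‖ ≤ 4 * ν / (R - r) := hfin
    _ = 8 / ((1 - R) * (R - r)) * Real.exp ((t₂ - t₁) * ‖A‖) * ‖A‖ * (t₂ - t₁) := by
        rw [hνdef]
        field_simp
        ring
    _ ≤ C * ‖A‖ * (t₂ - t₁) := by
        rw [hCdef]
        have hb : (0:ℝ) ≤ 8 / ((1 - R) * (R - r)) := by positivity
        have h1 : 8 / ((1 - R) * (R - r)) * Real.exp ((t₂ - t₁) * ‖A‖)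
            ≤ 8 / ((1 - R) * (R - r)) * Real.exp ‖A‖ :=
          mul_le_mul_of_nonneg_left hexpmono hb
        have h2 : (0:ℝ) ≤ ‖A‖ * (t₂ - t₁) := by positivity
        calc 8 / ((1 - R) * (R - r)) * Real.exp ((t₂ - t₁) * ‖A‖) * ‖A‖ * (t₂ - t₁)
            = (8 / ((1 - R) * (R - r)) * Real.exp ((t₂ - t₁) * ‖A‖)) * (‖A‖ * (t₂ - t₁)) := by
              ring
        _ ≤ (8 / ((1 - R) * (R - r)) * Real.exp ‖A‖) * (‖A‖ * (t₂ - t₁)) :=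
              mul_le_mul_of_nonneg_right h1 h2
        _ = 8 / ((1 - R) * (R - r)) * Real.exp ‖A‖ * ‖A‖ * (t₂ - t₁) := by ring
    _ ≤ M * ‖A‖ * (t₂ - t₁) := by
        rw [hMdef]
        have h3 : C ≤ max (2 / ‖A‖) C := le_max_right _ _
        have h4 : (0:ℝ) ≤ ‖A‖ * (t₂ - t₁) := by positivity
        calc C * ‖A‖ * (t₂ - t₁) = C * (‖A‖ * (t₂ - t₁)) := by ring
        _ ≤ max (2 / ‖A‖) C * (‖A‖ * (t₂ - t₁)) := mul_le_mul_of_nonneg_right h3 h4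
        _ = max (2 / ‖A‖) C * ‖A‖ * (t₂ - t₁) := by ring
  · -- large time increment
    have hwball : w ∈ ball (0:X) 1 := by
      simp only [mem_ball, dist_zero_right]
      linarith
    have h2' := hmg hwball
    have h2 : ‖v t₁ t₂ w‖ < 1 := by
      simpa [mem_ball, dist_zero_right] using h2'
    have h1 : ‖w - v t₁ t₂ w‖ ≤ 2 := by
      calc ‖w - v t₁ t₂ w‖ ≤ ‖w‖ + ‖v t₁ t₂ w‖ := norm_sub_le _ _
      _ ≤ 2 := by linarith
    calc ‖w - v t₁ t₂ w‖ ≤ 2 := h1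
    _ = (2 / ‖A‖) * ‖A‖ * 1 := by field_simp
    _ ≤ M * ‖A‖ * (t₂ - t₁) := by
        rw [hMdef]
        have h3 : 2 / ‖A‖ ≤ max (2 / ‖A‖) C := le_max_left _ _
        have h4 : (1:ℝ) ≤ t₂ - t₁ := hτ1.le
        have h5 : 2 / ‖A‖ * ‖A‖ * 1 ≤ max (2 / ‖A‖) C * ‖A‖ * 1 := by
          have := mul_le_mul_of_nonneg_right h3 hAnorm.le
          nlinarith only [this]
        have h6 : max (2 / ‖A‖) C * ‖A‖ * 1 ≤ max (2 / ‖A‖) C * ‖A‖ * (t₂ - t₁) := by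
          have hMA : (0:ℝ) ≤ max (2 / ‖A‖) C * ‖A‖ :=
            mul_nonneg (le_trans hC0.le (le_max_right _ _)) (norm_nonneg _)
          nlinarith only [hMA, h4]
        linarith
end
end

section
/- Let $X$ be a complex Banach space with unit ball $\mathbb{B}$, let $A \in L(X)$ with $m(A) > 0$, and let $f(z,t)$ be an $A$-normalized biholomorphic subordination chain on $\mathbb{B} \times [0,\infty)$ such that $\|e^{-tA} f(z,t)\| \leq M$ for $\|z\| \leq \rho$ and all $t \geq 0$, for some $\rho \in (0,1)$ and $M > 0$. Then the Loewner range is all of $X$: $\bigcup_{t \geq 0} f(\mathbb{B}, t) = X$. -/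
open Metric Set

noncomputable section

section Aux

variable {X : Type*} [NormedAddCommGroup X] [NormedSpace ℂ X]

private lemma mLower_bddBelow (A : X →L[ℂ] X) :
    BddBelow {x | ∃ z ℓ, ‖z‖ = 1 ∧ ℓ ∈ normingFunctionals z ∧ x = (ℓ (A z)).re} := by
  refine ⟨-‖A‖, ?_⟩
  rintro x ⟨z, ℓ, hz, ⟨hℓz, hℓn⟩, rfl⟩
  have h1 : ‖ℓ (A z)‖ ≤ ‖A‖ := by
    calc ‖ℓ (A z)‖ ≤ ‖ℓ‖ * ‖A z‖ := ℓ.le_opNorm _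
    _ ≤ 1 * (‖A‖ * ‖z‖) := by
        rw [hℓn]
        exact mul_le_mul_of_nonneg_left (A.le_opNorm z) one_pos.le
    _ = ‖A‖ := by rw [hz]; ring
  have h2 : |(ℓ (A z)).re| ≤ ‖ℓ (A z)‖ := by
    exact Complex.abs_re_le_norm _
  have := neg_abs_le (ℓ (A z)).re
  linarith

private lemma re_norming_ge (A : X →L[ℂ] X) (v : X) (hv : v ≠ 0) :
    ∃ ℓ : X →L[ℂ] ℂ, ‖ℓ‖ = 1 ∧ ℓ v = (‖v‖ : ℂ) ∧ mLower A * ‖v‖ ≤ (ℓ (A v)).re := by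
  obtain ⟨ℓ, hℓn, hℓv⟩ := exists_dual_vector ℂ v (norm_ne_zero_iff.2 hv)
  refine ⟨ℓ, hℓn, hℓv, ?_⟩
  have hvn : (0 : ℝ) < ‖v‖ := norm_pos_iff.2 hv
  set c : ℂ := ((‖v‖⁻¹ : ℝ) : ℂ) with hc
  set z := c • v with hzdef
  have hz : ‖z‖ = 1 := by
    rw [hzdef, norm_smul, hc]
    simp [abs_of_nonneg (inv_nonneg.2 hvn.le)]
    field_simp
  have hℓz : ℓ z = (‖z‖ : ℂ) := by
    have hne : (‖v‖ : ℂ) ≠ 0 := by exact_mod_cast hvn.ne'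
    rw [hz, hzdef, map_smul, hℓv, hc]
    push_cast
    field_simp
    rw [smul_eq_mul, one_div]; exact inv_mul_cancel₀ hne
  have hmem : mLower A ≤ (ℓ (A z)).re :=
    csInf_le (mLower_bddBelow A) ⟨z, ℓ, hz, ⟨hℓz, hℓn⟩, rfl⟩
  have hAz : (ℓ (A z)).re = ‖v‖⁻¹ * (ℓ (A v)).re := by
    rw [hzdef, map_smul, map_smul, hc, smul_eq_mul, Complex.re_ofReal_mul]
  rw [hAz] at hmem
  have := mul_le_mul_of_nonneg_right hmem hvn.le
  calc mLower A * ‖v‖ ≤ ‖v‖⁻¹ * (ℓ (A v)).re * ‖v‖ := this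
    _ = (ℓ (A v)).re := by field_simp

private lemma exp_contract [CompleteSpace X] (A : X →L[ℂ] X) (hm : 0 < mLower A) :
    ∃ h : ℝ, 0 < h ∧
      ‖NormedSpace.exp ((-h : ℂ) • A)‖ ≤ (1 + mLower A / 2 * h)⁻¹ := by
  set m := mLower A with hmdef
  -- derivative of `u ↦ exp (u • A)` at `0` is `A`
  have hder : HasDerivAt (fun u : ℂ => NormedSpace.exp (u • A)) A 0 := by
    have := hasDerivAt_exp_smul_const (𝕂 := ℂ) A (0 : ℂ)
    simpa [NormedSpace.exp_zero] using this
  have hlo := (hasDerivAt_iff_isLittleO.mp hder).def (half_pos hm)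
  rw [Metric.eventually_nhds_iff] at hlo
  obtain ⟨ε, hε, hball⟩ := hlo
  set h : ℝ := ε / 2 with hhdef
  have hh : 0 < h := by positivity
  have hmem : dist ((h : ℂ)) 0 < ε := by
    rw [Complex.dist_eq, sub_zero, Complex.norm_real, Real.norm_eq_abs, abs_of_pos hh]
    rw [hhdef]; linarith
  have hR : ‖NormedSpace.exp ((h : ℂ) • A) - 1 - (h : ℂ) • A‖ ≤ m / 2 * h := by
    have := hball hmem
    simp only [sub_zero, zero_smul, NormedSpace.exp_zero] at this
    calc ‖NormedSpace.exp ((h : ℂ) • A) - 1 - (h : ℂ) • A‖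
        ≤ m / 2 * ‖(h : ℂ)‖ := this
      _ = m / 2 * h := by
          rw [Complex.norm_real, Real.norm_eq_abs, abs_of_pos hh]
  refine ⟨h, hh, ?_⟩
  have hpos : (0 : ℝ) < 1 + m / 2 * h := by nlinarith
  apply ContinuousLinearMap.opNorm_le_bound _ (by positivity)
  intro u
  set v : X := NormedSpace.exp ((-h : ℂ) • A) u with hvdef
  have hcomm : Commute ((h : ℂ) • A) ((-h : ℂ) • A) :=
    ((Commute.refl A).smul_left _).smul_right _
  have hone : NormedSpace.exp ((h : ℂ) • A) * NormedSpace.exp ((-h : ℂ) • A) = 1 := by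
    letI : NormedAlgebra ℚ (X →L[ℂ] X) := NormedAlgebra.restrictScalars ℚ ℂ _; rw [← NormedSpace.exp_add_of_commute hcomm, ← add_smul]
    norm_num
  have huv : NormedSpace.exp ((h : ℂ) • A) v = u := by
    rw [hvdef, ← ContinuousLinearMap.mul_apply, hone, ContinuousLinearMap.one_apply]
  rcases eq_or_ne v 0 with hv0 | hvne
  · rw [hv0, norm_zero]; positivity
  obtain ⟨ℓ, hℓ1, hℓv, hℓA⟩ := re_norming_ge A v hvne
  set R : X →L[ℂ] X := NormedSpace.exp ((h : ℂ) • A) - 1 - (h : ℂ) • A with hRdef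
  have e1 : NormedSpace.exp ((h : ℂ) • A) v = v + (h : ℂ) • (A v) + R v := by
    simp only [hRdef, ContinuousLinearMap.sub_apply, ContinuousLinearMap.smul_apply,
      ContinuousLinearMap.one_apply]
    abel
  have e2 : (ℓ u).re = ‖v‖ + h * (ℓ (A v)).re + (ℓ (R v)).re := by
    rw [← huv, e1]
    simp only [map_add, map_smul, Complex.add_re, smul_eq_mul, Complex.re_ofReal_mul, hℓv]
    simp
  have hRv : ‖ℓ (R v)‖ ≤ m / 2 * h * ‖v‖ := by
    calc ‖ℓ (R v)‖ ≤ ‖ℓ‖ * ‖R v‖ := ℓ.le_opNorm _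
      _ = ‖R v‖ := by rw [hℓ1, one_mul]
      _ ≤ ‖R‖ * ‖v‖ := R.le_opNorm v
      _ ≤ m / 2 * h * ‖v‖ := mul_le_mul_of_nonneg_right hR (norm_nonneg v)
  have hRre : -(m / 2 * h * ‖v‖) ≤ (ℓ (R v)).re := by
    have h1 : |(ℓ (R v)).re| ≤ ‖ℓ (R v)‖ := by
      exact Complex.abs_re_le_norm _
    have := neg_abs_le (ℓ (R v)).re
    linarith
  have hure : (ℓ u).re ≤ ‖u‖ := by
    have h1 : (ℓ u).re ≤ ‖ℓ u‖ := by
      exact Complex.re_le_norm _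
    have h2 : ‖ℓ u‖ ≤ ‖u‖ := by
      calc ‖ℓ u‖ ≤ ‖ℓ‖ * ‖u‖ := ℓ.le_opNorm u
        _ = ‖u‖ := by rw [hℓ1, one_mul]
    linarith
  have key : ‖v‖ * (1 + m / 2 * h) ≤ ‖u‖ := by nlinarith [norm_nonneg v]
  rw [inv_mul_eq_div, le_div_iff₀ hpos]
  exact key

private lemma exp_decay [CompleteSpace X] (A : X →L[ℂ] X) (hm : 0 < mLower A) {ε : ℝ}
    (hε : 0 < ε) : ∃ t : ℝ, 0 ≤ t ∧ ‖NormedSpace.exp ((-t : ℂ) • A)‖ < ε := by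
  obtain ⟨h, hh, hq⟩ := exp_contract A hm
  set q : ℝ := (1 + mLower A / 2 * h)⁻¹ with hqdef
  have hq0 : 0 ≤ q := by positivity
  have hq1 : q < 1 := by
    rw [hqdef, inv_lt_one_iff₀]
    right; nlinarith
  have htend : Filter.Tendsto (fun n : ℕ => q ^ n) Filter.atTop (nhds 0) :=
    tendsto_pow_atTop_nhds_zero_of_lt_one hq0 hq1
  obtain ⟨N, hN⟩ := (htend.eventually (eventually_lt_nhds hε)).exists_forall_of_atTop
  set n : ℕ := N + 1 with hndef
  have hn : q ^ n < ε := hN n (by omega)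
  refine ⟨n * h, by positivity, ?_⟩
  have hsmul : ((-(n * h : ℝ) : ℂ)) • A = n • ((-h : ℂ) • A) := by
    rw [← Nat.cast_smul_eq_nsmul ℂ, smul_smul]
    congr 1
    push_cast
    ring
  calc ‖NormedSpace.exp ((-(n * h : ℝ) : ℂ) • A)‖
      = ‖(NormedSpace.exp ((-h : ℂ) • A)) ^ n‖ := by letI : NormedAlgebra ℚ (X →L[ℂ] X) := NormedAlgebra.restrictScalars ℚ ℂ _; rw [hsmul, NormedSpace.exp_nsmul]
    _ ≤ ‖NormedSpace.exp ((-h : ℂ) • A)‖ ^ n := norm_pow_le' _ (by omega)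
    _ ≤ q ^ n := pow_le_pow_left₀ (norm_nonneg _) hq _
    _ < ε := hn

/-- Quadratic Schwarz lemma for Banach-space valued maps with vanishing value and
derivative at the origin. -/
private lemma schwarz_quadratic {e : X → X} {R B : ℝ} (hR : 0 < R) (hB : 0 < B)
    (he : DifferentiableOn ℂ e (ball (0 : X) R)) (h0 : e 0 = 0) (hd : fderiv ℂ e 0 = 0)
    (hbd : ∀ w ∈ ball (0 : X) R, ‖e w‖ ≤ B) :
    ∀ w ∈ ball (0 : X) R, ‖e w‖ ≤ B * ‖w‖ ^ 2 / R ^ 2 := by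
  intro w hw
  rcases eq_or_ne w 0 with rfl | hwne
  · rw [h0, norm_zero]; positivity
  rcases eq_or_ne (e w) 0 with hew | hew
  · rw [hew, norm_zero]; positivity
  have hwn : (0 : ℝ) < ‖w‖ := norm_pos_iff.2 hwne
  have hwR : ‖w‖ < R := mem_ball_zero_iff.1 hw
  obtain ⟨ℓ, hℓ1, hℓw⟩ := exists_dual_vector ℂ (e w) (norm_ne_zero_iff.2 hew)
  set R₁ : ℝ := R / ‖w‖ with hR₁def
  have hR₁ : 1 < R₁ := (one_lt_div hwn).2 hwR
  have hR₁0 : 0 < R₁ := lt_trans one_pos hR₁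
  set φ : ℂ → ℂ := fun lam => ℓ (e (lam • w)) with hφdef
  have hmapsσ : ∀ lam : ℂ, lam ∈ ball (0 : ℂ) R₁ → lam • w ∈ ball (0 : X) R := by
    intro lam hlam
    rw [mem_ball_zero_iff] at hlam ⊢
    rw [norm_smul]
    calc ‖lam‖ * ‖w‖ < R₁ * ‖w‖ := by
          exact mul_lt_mul_of_pos_right hlam hwn
      _ = R := by rw [hR₁def]; field_simp
  have hφd : DifferentiableOn ℂ φ (ball (0 : ℂ) R₁) := by
    have hσ : Differentiable ℂ (fun lam : ℂ => lam • w) := differentiable_id.smul_const w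
    have h1 : DifferentiableOn ℂ (fun lam : ℂ => e (lam • w)) (ball (0 : ℂ) R₁) :=
      he.comp hσ.differentiableOn hmapsσ
    exact ℓ.differentiable.comp_differentiableOn h1
  have hφ0 : φ 0 = 0 := by simp [hφdef, h0]
  have hφbd : ∀ lam ∈ ball (0 : ℂ) R₁, ‖φ lam‖ ≤ B := by
    intro lam hlam
    calc ‖φ lam‖ ≤ ‖ℓ‖ * ‖e (lam • w)‖ := ℓ.le_opNorm _
      _ = ‖e (lam • w)‖ := by rw [hℓ1, one_mul]
      _ ≤ B := hbd _ (hmapsσ lam hlam)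
  have hφderiv : deriv φ 0 = 0 := by
    have hσ' : HasDerivAt (fun lam : ℂ => lam • w) w 0 := by
      simpa using (hasDerivAt_id (0 : ℂ)).smul_const w
    have heA : DifferentiableAt ℂ e 0 :=
      he.differentiableAt (isOpen_ball.mem_nhds (mem_ball_self hR))
    have he' : HasFDerivAt e (0 : X →L[ℂ] X) 0 := hd ▸ heA.hasFDerivAt
    have he'' : HasFDerivAt e (0 : X →L[ℂ] X) ((0 : ℂ) • w) := by
      rwa [zero_smul]
    have hcomp : HasDerivAt (fun lam : ℂ => e (lam • w)) ((0 : X →L[ℂ] X) w) 0 :=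
      he''.comp_hasDerivAt 0 hσ'
    have hfin : HasDerivAt φ (ℓ ((0 : X →L[ℂ] X) w)) 0 :=
      (ℓ.hasFDerivAt.comp_hasDerivAt 0 hcomp)
    simpa using hfin.deriv
  set ψ : ℂ → ℂ := dslope φ 0 with hψdef
  have hψd : DifferentiableOn ℂ ψ (ball (0 : ℂ) R₁) :=
    (Complex.differentiableOn_dslope (isOpen_ball.mem_nhds (mem_ball_self hR₁0))).2 hφd
  have hψ0 : ψ 0 = 0 := by rw [hψdef, dslope_same, hφderiv]
  have hone : (1 : ℂ) ∈ ball (0 : ℂ) R₁ := by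
    rw [mem_ball_zero_iff]; simpa using hR₁
  -- key double-Schwarz bound, for every `ε > 0`
  have hkey : ∀ ε : ℝ, 0 < ε → ‖e w‖ ≤ ((B + ε) / R₁ + ε) / R₁ := by
    intro ε hε
    have hmaps1 : MapsTo φ (ball (0 : ℂ) R₁) (ball (φ 0) (B + ε)) := by
      intro lam hlam
      rw [mem_ball, hφ0, dist_zero_right]
      exact lt_of_le_of_lt (hφbd lam hlam) (by linarith)
    have hψbd : ∀ lam ∈ ball (0 : ℂ) R₁, ‖ψ lam‖ ≤ (B + ε) / R₁ := fun lam hlam =>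
      Complex.norm_dslope_le_div_of_mapsTo_ball hφd (hmaps1.mono_right ball_subset_closedBall) hlam
    have hmaps2 : MapsTo ψ (ball (0 : ℂ) R₁) (ball (ψ 0) ((B + ε) / R₁ + ε)) := by
      intro lam hlam
      rw [mem_ball, hψ0, dist_zero_right]
      exact lt_of_le_of_lt (hψbd lam hlam) (by linarith)
    have hχ : ‖dslope ψ 0 1‖ ≤ ((B + ε) / R₁ + ε) / R₁ :=
      Complex.norm_dslope_le_div_of_mapsTo_ball hψd (hmaps2.mono_right ball_subset_closedBall) hone
    have hχ1 : dslope ψ 0 1 = ψ 1 := by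
      rw [dslope_of_ne _ one_ne_zero, slope_def_field, hψ0]
      simp
    have hψ1 : ψ 1 = φ 1 := by
      rw [hψdef, dslope_of_ne _ one_ne_zero, slope_def_field, hφ0]
      simp
    have hφ1 : ‖φ 1‖ = ‖e w‖ := by
      rw [hφdef]
      simp only [one_smul]
      rw [hℓw]
      simp [abs_of_nonneg (norm_nonneg (e w))]
    rw [hχ1, hψ1, hφ1] at hχ
    exact hχ
  have hlim : Filter.Tendsto (fun ε : ℝ => ((B + ε) / R₁ + ε) / R₁) (nhdsWithin 0 (Ioi 0))
      (nhds (B / R₁ ^ 2)) := by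
    have : Filter.Tendsto (fun ε : ℝ => ((B + ε) / R₁ + ε) / R₁) (nhds 0)
        (nhds (((B + 0) / R₁ + 0) / R₁)) := by
      apply Filter.Tendsto.div_const
      apply Filter.Tendsto.add
      · exact (Filter.tendsto_id.const_add B).div_const R₁
      · exact Filter.tendsto_id
    rw [add_zero, add_zero, div_div, ← sq] at this
    exact this.mono_left nhdsWithin_le_nhds
  have hle : ‖e w‖ ≤ B / R₁ ^ 2 := by
    refine ge_of_tendsto hlim ?_
    filter_upwards [self_mem_nhdsWithin] with ε hε
    exact hkey ε hε
  calc ‖e w‖ ≤ B / R₁ ^ 2 := hle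
    _ = B * ‖w‖ ^ 2 / R ^ 2 := by
        rw [hR₁def, div_pow, div_div_eq_mul_div]

/-- On a small ball, the error term of a normalized bounded holomorphic map is a
`1/2`-Lipschitz perturbation. -/
private lemma lip_half {e : X → X} {ρ B r : ℝ} (hρ : 0 < ρ) (hB : 1 ≤ B)
    (he : DifferentiableOn ℂ e (ball (0 : X) ρ)) (h0 : e 0 = 0) (hd : fderiv ℂ e 0 = 0)
    (hbd : ∀ w ∈ ball (0 : X) ρ, ‖e w‖ ≤ B)
    (hr1 : 0 < r) (hr2 : r ≤ ρ / 4) (hr3 : r ≤ ρ ^ 2 / (27 * B)) :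
    ∀ z ∈ ball (0 : X) r, ∀ z' ∈ ball (0 : X) r,
      ‖e z - e z'‖ ≤ (1 / 2) * ‖z - z'‖ := by
  have hB0 : (0 : ℝ) < B := lt_of_lt_of_le one_pos hB
  have hQ := schwarz_quadratic hρ hB0 he h0 hd hbd
  intro z hz z' hz'
  rcases eq_or_ne (z - z') 0 with hd0 | hdne
  · have hzz : z = z' := sub_eq_zero.1 hd0
    subst hzz; simp
  rcases eq_or_ne (e z - e z') 0 with hee | hee
  · rw [hee, norm_zero]; positivity
  set d : X := z - z' with hddef
  have hdn : (0 : ℝ) < ‖d‖ := norm_pos_iff.2 hdne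
  have hzr : ‖z‖ < r := mem_ball_zero_iff.1 hz
  have hz'r : ‖z'‖ < r := mem_ball_zero_iff.1 hz'
  have hdlt : ‖d‖ < 2 * r := by
    calc ‖d‖ ≤ ‖z‖ + ‖z'‖ := norm_sub_le _ _
      _ < 2 * r := by linarith
  set τ : ℝ := 2 * r / ‖d‖ with hτdef
  have hτ1 : 1 < τ := (one_lt_div hdn).2 hdlt
  have hτ0 : 0 < τ := lt_trans one_pos hτ1
  obtain ⟨ℓ, hℓ1, hℓw⟩ := exists_dual_vector ℂ _ (norm_ne_zero_iff.2 hee)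
  set ξ : ℂ → ℂ := fun lam => ℓ (e (z' + lam • d)) with hξdef
  have h3rρ : 3 * r ≤ ρ := by linarith
  have hmaps : ∀ lam : ℂ, lam ∈ ball (0 : ℂ) τ → z' + lam • d ∈ ball (0 : X) (3 * r) := by
    intro lam hlam
    rw [mem_ball_zero_iff] at hlam ⊢
    calc ‖z' + lam • d‖ ≤ ‖z'‖ + ‖lam • d‖ := norm_add_le _ _
      _ = ‖z'‖ + ‖lam‖ * ‖d‖ := by rw [norm_smul]
      _ < r + τ * ‖d‖ := by
          have := mul_lt_mul_of_pos_right hlam hdn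
          linarith
      _ = 3 * r := by rw [hτdef]; field_simp; ring
  have hmapsρ : ∀ lam : ℂ, lam ∈ ball (0 : ℂ) τ → z' + lam • d ∈ ball (0 : X) ρ := by
    intro lam hlam
    exact ball_subset_ball h3rρ (hmaps lam hlam)
  have hξd : DifferentiableOn ℂ ξ (ball (0 : ℂ) τ) := by
    have hσ : Differentiable ℂ (fun lam : ℂ => z' + lam • d) :=
      (differentiable_id.smul_const d).const_add z'
    have h1 : DifferentiableOn ℂ (fun lam : ℂ => e (z' + lam • d)) (ball (0 : ℂ) τ) :=
      he.comp hσ.differentiableOn hmapsρ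
    exact ℓ.differentiable.comp_differentiableOn h1
  set β : ℝ := B * (3 * r) ^ 2 / ρ ^ 2 with hβdef
  have hβ0 : 0 < β := by positivity
  have hξbd : ∀ lam ∈ ball (0 : ℂ) τ, ‖ξ lam‖ ≤ β := by
    intro lam hlam
    have h1 : ‖e (z' + lam • d)‖ ≤ B * ‖z' + lam • d‖ ^ 2 / ρ ^ 2 :=
      hQ _ (hmapsρ lam hlam)
    have h2 : ‖z' + lam • d‖ ≤ 3 * r := le_of_lt (mem_ball_zero_iff.1 (hmaps lam hlam))
    have h3 : B * ‖z' + lam • d‖ ^ 2 / ρ ^ 2 ≤ β := by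
      rw [hβdef]
      gcongr
    calc ‖ξ lam‖ ≤ ‖ℓ‖ * ‖e (z' + lam • d)‖ := ℓ.le_opNorm _
      _ = ‖e (z' + lam • d)‖ := by rw [hℓ1, one_mul]
      _ ≤ β := le_trans h1 h3
  have hβr : β ≤ r / 3 := by
    have h27 : 27 * B * r ≤ ρ ^ 2 := by
      have := (le_div_iff₀ (by positivity : (0:ℝ) < 27 * B)).1 hr3
      linarith
    rw [hβdef, div_le_iff₀ (by positivity : (0:ℝ) < ρ ^ 2)]
    nlinarith
  have hmapsTo : MapsTo ξ (ball (0 : ℂ) τ) (ball (ξ 0) r) := by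
    intro lam hlam
    rw [mem_ball]
    have h0' : (0 : ℂ) ∈ ball (0 : ℂ) τ := mem_ball_self hτ0
    calc dist (ξ lam) (ξ 0) ≤ ‖ξ lam‖ + ‖ξ 0‖ := by
          rw [dist_eq_norm]; exact norm_sub_le _ _
      _ ≤ β + β := add_le_add (hξbd lam hlam) (hξbd 0 h0')
      _ < r := by linarith
  have h1mem : (1 : ℂ) ∈ ball (0 : ℂ) τ := by
    rw [mem_ball_zero_iff]; simpa using hτ1
  have hdist := Complex.dist_le_div_mul_dist_of_mapsTo_ball hξd (hmapsTo.mono_right ball_subset_closedBall) h1mem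
  have hdist10 : dist (1 : ℂ) 0 = 1 := by simp
  rw [hdist10, mul_one] at hdist
  have hrt : r / τ = ‖d‖ / 2 := by
    rw [hτdef]
    field_simp
  rw [hrt] at hdist
  have hξ1 : ξ 1 = ℓ (e z) := by
    rw [hξdef]
    simp only [one_smul, hddef]
    rw [add_sub_cancel]
  have hξ0 : ξ 0 = ℓ (e z') := by
    rw [hξdef]
    simp
  have hfinal : dist (ξ 1) (ξ 0) = ‖e z - e z'‖ := by
    rw [hξ1, hξ0, dist_eq_norm, ← map_sub, hℓw]
    simp [abs_of_nonneg (norm_nonneg _)]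
  rw [hfinal] at hdist
  linarith

end Aux

theorem loewner_range_eq_univ {X : Type*} [NormedAddCommGroup X] [NormedSpace ℂ X]
    [CompleteSpace X] (A : X →L[ℂ] X) (hm : 0 < mLower A)
    (f : ℝ → X → X) (ρ M : ℝ) (hρ : ρ ∈ Set.Ioo (0 : ℝ) 1) (hM : 0 < M)
    -- `f` is a subordination chain:
    (hf_hol : ∀ t : ℝ, 0 ≤ t → DifferentiableOn ℂ (f t) (ball (0 : X) 1))
    (hf0 : ∀ t : ℝ, 0 ≤ t → f t 0 = 0)
    (hf_sub : ∀ s t : ℝ, 0 ≤ s → s ≤ t → ∃ w : X → X, IsSchwarzMapping w ∧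
      ∀ z ∈ ball (0 : X) 1, f s z = f t (w z))
    -- `A`-normalized:
    (hf_norm : ∀ t : ℝ, 0 ≤ t → fderiv ℂ (f t) 0 = NormedSpace.exp ((t : ℂ) • A))
    -- biholomorphic onto the image:
    (hf_inj : ∀ t : ℝ, 0 ≤ t → InjOn (f t) (ball (0 : X) 1))
    (hf_open : ∀ t : ℝ, 0 ≤ t → IsOpen (f t '' ball (0 : X) 1))
    (hf_inv : ∀ t : ℝ, 0 ≤ t → ∃ g : X → X,
      DifferentiableOn ℂ g (f t '' ball (0 : X) 1) ∧ ∀ z ∈ ball (0 : X) 1, g (f t z) = z)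
    -- uniform bound:
    (hf_bd : ∀ t : ℝ, 0 ≤ t → ∀ z : X, ‖z‖ ≤ ρ →
      ‖NormedSpace.exp ((-t : ℂ) • A) (f t z)‖ ≤ M) :
    (⋃ t ∈ Set.Ici (0 : ℝ), f t '' ball (0 : X) 1) = Set.univ := by
  rw [eq_univ_iff_forall]
  intro y
  rw [mem_iUnion₂]
  obtain ⟨hρ0, hρ1⟩ := hρ
  set B : ℝ := M + 1 with hBdef
  have hB1 : (1 : ℝ) ≤ B := by rw [hBdef]; linarith
  have hB0 : (0 : ℝ) < B := by linarith
  set r : ℝ := min (ρ / 4) (ρ ^ 2 / (27 * B)) with hrdef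
  have hr0 : 0 < r := lt_min (by positivity) (by positivity)
  have hr1 : r ≤ ρ / 4 := min_le_left _ _
  have hr2 : r ≤ ρ ^ 2 / (27 * B) := min_le_right _ _
  have hrlt1 : r < 1 := lt_of_le_of_lt hr1 (by linarith)
  have hεpos : 0 < r / (2 * (‖y‖ + 1)) := by positivity
  obtain ⟨t, ht, hN⟩ := exp_decay A hm hεpos
  obtain ⟨T, hTdef⟩ : ∃ T : X →L[ℂ] X, T = NormedSpace.exp ((-t : ℂ) • A) := ⟨_, rfl⟩
  rw [← hTdef] at hN
  obtain ⟨N, hNdef⟩ : ∃ N : ℝ, N = ‖T‖ := ⟨_, rfl⟩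
  rw [← hNdef] at hN
  have hN0 : 0 ≤ N := hNdef ▸ norm_nonneg _
  obtain ⟨e, hedef⟩ : ∃ e : X → X, e = fun z => T (f t z) - z := ⟨_, rfl⟩
  have hball1 : ball (0 : X) ρ ⊆ ball 0 1 := ball_subset_ball hρ1.le
  have he_diff : DifferentiableOn ℂ e (ball (0 : X) ρ) := by
    rw [hedef]
    exact (T.differentiable.comp_differentiableOn ((hf_hol t ht).mono hball1)).sub
      differentiableOn_id
  have he0 : e 0 = 0 := by rw [hedef]; simp [hf0 t ht]
  have hD : HasFDerivAt (f t) (NormedSpace.exp ((t : ℂ) • A)) 0 := by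
    have h1 : DifferentiableAt ℂ (f t) 0 :=
      (hf_hol t ht).differentiableAt (isOpen_ball.mem_nhds (mem_ball_self one_pos))
    have h2 := h1.hasFDerivAt
    rwa [hf_norm t ht] at h2
  have hTE : T.comp (NormedSpace.exp ((t : ℂ) • A)) = 1 := by
    have hcomm : Commute ((-t : ℂ) • A) ((t : ℂ) • A) :=
      ((Commute.refl A).smul_left _).smul_right _
    letI : NormedAlgebra ℚ (X →L[ℂ] X) := NormedAlgebra.restrictScalars ℚ ℂ _; rw [hTdef, ← ContinuousLinearMap.mul_def, ← NormedSpace.exp_add_of_commute hcomm,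
      ← add_smul]
    norm_num
  have he_d : fderiv ℂ e 0 = 0 := by
    have h2 : HasFDerivAt (fun z => T (f t z))
        (T.comp (NormedSpace.exp ((t : ℂ) • A))) 0 := T.hasFDerivAt.comp 0 hD
    have h3 := h2.sub (hasFDerivAt_id (0 : X))
    have h4 : T.comp (NormedSpace.exp ((t : ℂ) • A)) - ContinuousLinearMap.id ℂ X
        = 0 := by
      rw [hTE, ContinuousLinearMap.one_def, sub_self]
    rw [h4] at h3
    rw [hedef]
    exact h3.fderiv
  have he_bd : ∀ w ∈ ball (0 : X) ρ, ‖e w‖ ≤ B := by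
    intro w hw
    have h1 := hf_bd t ht w (mem_ball_zero_iff.1 hw).le
    rw [← hTdef] at h1
    rw [hedef]
    have h2 : ‖w‖ < 1 := lt_of_lt_of_le (mem_ball_zero_iff.1 hw) hρ1.le
    calc ‖T (f t w) - w‖ ≤ ‖T (f t w)‖ + ‖w‖ := norm_sub_le _ _
      _ ≤ M + 1 := add_le_add h1 h2.le
  have hLip := lip_half hρ0 hB1 he_diff he0 he_d he_bd hr0 hr1 hr2
  have hlow : ∀ z ∈ ball (0 : X) r, ∀ z' ∈ ball (0 : X) r,
      ‖z - z'‖ ≤ 2 * N * ‖f t z - f t z'‖ := by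
    intro z hz z' hz'
    have h1 := hLip z hz z' hz'
    have h2 : z - z' = (T (f t z) - T (f t z')) - (e z - e z') := by
      simp only [hedef]; abel
    have h3 : ‖T (f t z) - T (f t z')‖ ≤ N * ‖f t z - f t z'‖ := by
      rw [← map_sub, hNdef]; exact T.le_opNorm _
    have h4 : ‖z - z'‖ ≤ ‖T (f t z) - T (f t z')‖ + ‖e z - e z'‖ := by
      calc ‖z - z'‖ = ‖(T (f t z) - T (f t z')) - (e z - e z')‖ := by rw [← h2]
        _ ≤ ‖T (f t z) - T (f t z')‖ + ‖e z - e z'‖ := norm_sub_le _ _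
    linarith
  have hr1' : ball (0 : X) r ⊆ ball 0 1 := ball_subset_ball hrlt1.le
  obtain ⟨g, hg1, hg2⟩ := hf_inv t ht
  have hVeq : f t '' ball 0 r = (f t '' ball 0 1) ∩ g ⁻¹' (ball 0 r) := by
    ext u; constructor
    · rintro ⟨z, hz, rfl⟩
      exact ⟨mem_image_of_mem _ (hr1' hz), by
        rw [mem_preimage, hg2 z (hr1' hz)]; exact hz⟩
    · rintro ⟨⟨w, hw, rfl⟩, hpre⟩
      rw [mem_preimage, hg2 w hw] at hpre
      exact mem_image_of_mem _ hpre
  have hVopen : IsOpen (f t '' ball 0 r) := by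
    rw [hVeq]
    exact hg1.continuousOn.isOpen_inter_preimage (hf_open t ht) isOpen_ball
  set S : Set ℝ := {s | s ∈ Icc (0 : ℝ) 1 ∧ s • y ∈ f t '' ball 0 r} with hSdef
  have hS0 : (0 : ℝ) ∈ S := by
    refine ⟨⟨le_refl 0, zero_le_one⟩, ?_⟩
    rw [zero_smul]
    exact ⟨0, mem_ball_self hr0, hf0 t ht⟩
  have hSne : S.Nonempty := ⟨0, hS0⟩
  have hSbdd : BddAbove S := ⟨1, fun s hs => hs.1.2⟩
  set c := sSup S with hcdef
  have hc0 : 0 ≤ c := le_csSup hSbdd hS0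
  have hc1 : c ≤ 1 := csSup_le hSne fun s hs => hs.1.2
  obtain ⟨u, hu_mono, hu_tend, hu_mem⟩ := exists_seq_tendsto_sSup hSne hSbdd
  have hex : ∀ n : ℕ, ∃ z, z ∈ ball (0 : X) r ∧ f t z = u n • y := fun n => (hu_mem n).2
  choose zfun hzball hzval using hex
  have hdistz : ∀ a b : ℕ, dist (zfun a) (zfun b) ≤ 2 * N * ‖y‖ * dist (u a) (u b) := by
    intro a b
    have h1 := hlow (zfun a) (hzball a) (zfun b) (hzball b)
    rw [hzval a, hzval b] at h1
    rw [dist_eq_norm]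
    calc ‖zfun a - zfun b‖ ≤ 2 * N * ‖u a • y - u b • y‖ := h1
      _ = 2 * N * ‖(u a - u b) • y‖ := by rw [← sub_smul]
      _ = 2 * N * (|u a - u b| * ‖y‖) := by rw [norm_smul, Real.norm_eq_abs]
      _ = 2 * N * ‖y‖ * dist (u a) (u b) := by rw [Real.dist_eq]; ring
  have hcauchy : CauchySeq zfun := by
    have hu_cauchy : CauchySeq u := hu_tend.cauchySeq
    rw [Metric.cauchySeq_iff] at hu_cauchy ⊢
    intro δ hδ
    have hNy : 0 ≤ 2 * N * ‖y‖ :=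
      mul_nonneg (by linarith : (0:ℝ) ≤ 2 * N) (norm_nonneg y)
    obtain ⟨L, hL, hL2⟩ : ∃ L : ℝ, 0 < L ∧ 2 * N * ‖y‖ ≤ L :=
      ⟨2 * N * ‖y‖ + 1, by linarith, by linarith⟩
    obtain ⟨K, hK⟩ := hu_cauchy (δ / L) (by positivity)
    refine ⟨K, fun a ha b hb => ?_⟩
    have h2 := hK a ha b hb
    calc dist (zfun a) (zfun b) ≤ 2 * N * ‖y‖ * dist (u a) (u b) := hdistz a b
      _ ≤ L * dist (u a) (u b) := mul_le_mul_of_nonneg_right hL2 dist_nonneg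
      _ < L * (δ / L) := mul_lt_mul_of_pos_left h2 hL
      _ = δ := by field_simp
  obtain ⟨zlim, hzlim⟩ := cauchySeq_tendsto_of_complete hcauchy
  have hzn_bd : ∀ n, ‖zfun n‖ ≤ 2 * N * ‖y‖ := by
    intro n
    have h1 := hlow (zfun n) (hzball n) 0 (mem_ball_self hr0)
    rw [sub_zero, hf0 t ht, sub_zero, hzval n] at h1
    have h2 : |u n| ≤ 1 := abs_le.2 ⟨by linarith [(hu_mem n).1.1], (hu_mem n).1.2⟩
    calc ‖zfun n‖ ≤ 2 * N * ‖u n • y‖ := h1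
      _ = 2 * N * (|u n| * ‖y‖) := by rw [norm_smul, Real.norm_eq_abs]
      _ ≤ 2 * N * ‖y‖ := by
          have h3 : 0 ≤ 2 * N * ‖y‖ * (1 - |u n|) :=
            mul_nonneg (mul_nonneg (by linarith) (norm_nonneg y)) (by linarith)
          nlinarith [h3]
  have hKr : 2 * N * ‖y‖ < r := by
    have h2 : N * (2 * (‖y‖ + 1)) < r := (lt_div_iff₀ (by positivity)).1 hN
    nlinarith [norm_nonneg y]
  have hzlim_ball : zlim ∈ ball (0 : X) r := by
    rw [mem_ball_zero_iff]
    have h1 : ‖zlim‖ ≤ 2 * N * ‖y‖ :=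
      le_of_tendsto hzlim.norm (Filter.Eventually.of_forall hzn_bd)
    exact lt_of_le_of_lt h1 hKr
  have hflim : f t zlim = c • y := by
    have hcont : ContinuousWithinAt (f t) (ball (0 : X) 1) zlim :=
      (hf_hol t ht).continuousOn zlim (hr1' hzlim_ball)
    have htendz : Filter.Tendsto zfun Filter.atTop
        (nhdsWithin zlim (ball (0 : X) 1)) := by
      rw [tendsto_nhdsWithin_iff]
      exact ⟨hzlim, Filter.Eventually.of_forall fun n => hr1' (hzball n)⟩
    have h5 : Filter.Tendsto (fun n => f t (zfun n)) Filter.atTop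
        (nhds (f t zlim)) := hcont.tendsto.comp htendz
    have h6 : (fun n => f t (zfun n)) = fun n => u n • y := funext hzval
    rw [h6] at h5
    have h7 : Filter.Tendsto (fun n => u n • y) Filter.atTop (nhds (c • y)) :=
      hu_tend.smul_const y
    exact tendsto_nhds_unique h5 h7
  have hcS : c ∈ S := ⟨⟨hc0, hc1⟩, ⟨zlim, hzlim_ball, hflim⟩⟩
  have hceq : c = 1 := by
    by_contra hne
    have hclt : c < 1 := lt_of_le_of_ne hc1 hne
    have hmemV : c • y ∈ f t '' ball 0 r := hcS.2
    have hcont : Continuous fun s : ℝ => s • y := continuous_id.smul continuous_const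
    have hnhds : (fun s : ℝ => s • y) ⁻¹' (f t '' ball 0 r) ∈ nhds c :=
      hcont.continuousAt.preimage_mem_nhds (hVopen.mem_nhds hmemV)
    rw [Metric.mem_nhds_iff] at hnhds
    obtain ⟨ε, hε, hball⟩ := hnhds
    set s : ℝ := min 1 (c + ε / 2) with hsdef
    have hcs : c < s := lt_min hclt (by linarith)
    have hsc : s - c ≤ ε / 2 := by
      have := min_le_right 1 (c + ε / 2)
      rw [hsdef]; linarith
    have hsS : s ∈ S := by
      refine ⟨⟨le_trans hc0 hcs.le, min_le_left _ _⟩, ?_⟩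
      apply hball
      rw [mem_ball, Real.dist_eq, abs_of_pos (by linarith : 0 < s - c)]
      linarith
    have : s ≤ c := le_csSup hSbdd hsS
    linarith
  refine ⟨t, ht, ?_⟩
  have : c • y ∈ f t '' ball 0 1 := (image_mono hr1') hcS.2
  rwa [hceq, one_smul] at this
end
end

section
/- Under the same hypotheses (reflexive $X$, $m(A) > 0$, Schwarz family $v(z,s,t)$ with semigroup property, $v(z,s,t)\neq 0$ for $z\neq 0$, $Dv(0,s,t) = e^{-(t-s)A}$), the lower growth estimate holds: $e^{-k(A)(t-s)} \frac{\|z\|}{(1+\|z\|)^2} \leq \frac{\|v(z,s,t)\|}{(1+\|v(z,s,t)\|)^2}$ for all $z \in \mathbb{B}$ and $t \geq s \geq 0$. -/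
open Metric Set

noncomputable section

set_option maxHeartbeats 1000000
set_option linter.unusedVariables false

section AuxiliaryLemmas
open Complex

lemma aux_normSq_key (a w : ℂ) :
    Complex.normSq (1 - (starRingEnd ℂ) a * w) - Complex.normSq (w - a)
      = (1 - Complex.normSq a) * (1 - Complex.normSq w) := by
  simp only [Complex.normSq_apply, Complex.sub_re, Complex.sub_im, Complex.mul_re,
    Complex.mul_im, Complex.one_re, Complex.one_im, Complex.conj_re, Complex.conj_im]
  ring

lemma aux_normSq_le_one {a : ℂ} (ha : ‖a‖ ≤ 1) : Complex.normSq a ≤ 1 := by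
  rw [← Complex.sq_norm]
  have : ‖a‖ ≤ 1 := ha
  nlinarith [norm_nonneg a]

-- L2: Möbius maps closed disc to closed disc
lemma aux_mobius (a w : ℂ) (ha : ‖a‖ ≤ 1) (hw : ‖w‖ ≤ 1) :
    ‖w - a‖ ≤ ‖1 - (starRingEnd ℂ) a * w‖ := by
  have h1 : Complex.normSq (w - a) ≤ Complex.normSq (1 - (starRingEnd ℂ) a * w) := by
    have := aux_normSq_key a w
    nlinarith [aux_normSq_le_one ha, aux_normSq_le_one hw, Complex.normSq_nonneg a,
      Complex.normSq_nonneg w]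
  rw [Complex.norm_def, Complex.norm_def]
  exact Real.sqrt_le_sqrt h1

-- L1: Schwarz-Pick extraction
lemma aux_pick (a w : ℂ) (L : ℝ) (hL0 : 0 ≤ L) (hL1 : L ≤ 1) (ha : ‖a‖ ≤ 1) (hw : ‖w‖ ≤ 1)
    (h : ‖w - a‖ ≤ L * ‖1 - (starRingEnd ℂ) a * w‖) :
    ‖a‖ - L ≤ ‖w‖ * (1 - ‖a‖ * L) := by
  set s := ‖a‖ with hs
  set t := ‖w‖ with ht
  have hs0 : 0 ≤ s := norm_nonneg a
  have ht0 : 0 ≤ t := norm_nonneg w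
  have hx : ((starRingEnd ℂ) a * w).re ≤ s * t := by
    calc ((starRingEnd ℂ) a * w).re ≤ ‖(starRingEnd ℂ) a * w‖ := Complex.re_le_norm _
    _ = s * t := by rw [norm_mul]; simp [hs, ht]
  have hsq : Complex.normSq (w - a) ≤ L ^ 2 * Complex.normSq (1 - (starRingEnd ℂ) a * w) := by
    have h2 := mul_le_mul h h (norm_nonneg _) (le_trans (norm_nonneg _) h)
    rw [← Complex.sq_norm, ← Complex.sq_norm]
    calc ‖w - a‖ ^ 2 = ‖w - a‖ * ‖w - a‖ := by
          ring
    _ ≤ (L * ‖1 - (starRingEnd ℂ) a * w‖) * (L * ‖1 - (starRingEnd ℂ) a * w‖) := h2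
    _ = L ^ 2 * ‖1 - (starRingEnd ℂ) a * w‖ ^ 2 := by
          ring
  -- expand normSq
  have e1 : Complex.normSq (w - a) = t ^ 2 + s ^ 2 - 2 * ((starRingEnd ℂ) a * w).re := by
    rw [Complex.normSq_sub]
    have : (w * (starRingEnd ℂ) a).re = ((starRingEnd ℂ) a * w).re := by rw [mul_comm]
    rw [this, ← Complex.sq_norm, ← Complex.sq_norm]
  have hsa : Complex.normSq a = s ^ 2 := by rw [← Complex.sq_norm, hs]
  have hsw : Complex.normSq w = t ^ 2 := by rw [← Complex.sq_norm, ht]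
  have e2 : Complex.normSq (1 - (starRingEnd ℂ) a * w)
      = 1 + s ^ 2 * t ^ 2 - 2 * ((starRingEnd ℂ) a * w).re := by
    have h3 := aux_normSq_key a w
    rw [e1, hsa, hsw] at h3
    nlinarith [h3]
  rw [e1, e2] at hsq
  set x := ((starRingEnd ℂ) a * w).re
  -- (s-t)^2 ≤ L^2 (1-st)^2
  have h1L : 0 ≤ 1 - L ^ 2 := by nlinarith
  have h2L : 0 ≤ (1 - L ^ 2) * (s * t - x) := mul_nonneg h1L (by linarith)
  have key : (s - t) ^ 2 ≤ (L * (1 - s * t)) ^ 2 := by nlinarith [hsq, h2L]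
  have hst1 : s * t ≤ 1 := by nlinarith
  have habs : s - t ≤ L * (1 - s * t) := by
    have hpos : 0 ≤ L * (1 - s * t) := mul_nonneg hL0 (by linarith)
    nlinarith [key, hpos]
  nlinarith [habs]

lemma core_abstract {ε η ρ σ c₀ : ℝ} (hε0 : 0 ≤ ε) (hη0 : 0 ≤ η)
    (hρ0 : 0 < ρ) (hρ1 : ρ < 1) (hσ0 : 0 ≤ σ) (hσ1 : σ < 1)
    (hc₀ : c₀ = 1 - ε) (hgap : 0 < c₀ - ρ)
    (hkeynum : (1 + η) * ε ^ 2 * ρ ≤ (1 - ρ) ^ 2 * (η - ε - η * ε))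
    (hmain : ρ * (c₀ - ρ) ≤ σ * (1 - c₀ * ρ)) :
    ρ * (1 + σ) ^ 2 ≤ (1 + η) * (σ * (1 + ρ) ^ 2) := by
  have hc₀1 : c₀ ≤ 1 := by rw [hc₀]; linarith
  have hden : 0 < 1 - c₀ * ρ := by nlinarith
  -- (1-ρ)² ≤ (1+η)(c₀-ρ)(1-c₀ρ)
  have hkey : (1 - ρ) ^ 2 ≤ (1 + η) * ((c₀ - ρ) * (1 - c₀ * ρ)) := by
    have hid : (c₀ - ρ) * (1 - c₀ * ρ) = (1 - ρ) ^ 2 * (1 - ε) - ε ^ 2 * ρ := by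
      rw [hc₀]; ring
    nlinarith [hkeynum, hid]
  obtain ⟨F, hFdef⟩ : ∃ F : ℝ, F = ρ * (c₀ - ρ) / (1 - c₀ * ρ) := ⟨_, rfl⟩
  have hFmul : F * (1 - c₀ * ρ) = ρ * (c₀ - ρ) := by
    rw [hFdef]; exact div_mul_cancel₀ _ hden.ne'
  have hF0 : 0 < F := by
    rw [hFdef]; apply div_pos (by nlinarith) hden
  have hFρ : F ≤ ρ := by
    rw [hFdef, div_le_iff₀ hden]
    nlinarith [mul_nonneg (mul_nonneg hρ0.le (by linarith : (0:ℝ) ≤ 1 + ρ))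
      (by linarith : (0:ℝ) ≤ 1 - c₀)]
  have hF1 : F < 1 := lt_of_le_of_lt hFρ hρ1
  have hσF : F ≤ σ := by
    rw [hFdef, div_le_iff₀ hden]; exact hmain
  have hFid : (1 + F) * (1 - c₀ * ρ) = 1 - ρ ^ 2 := by
    linear_combination hFmul
  -- (ii): ρ(1+F)² ≤ (1+η)(F(1+ρ)²)
  have hii : ρ * (1 + F) ^ 2 ≤ (1 + η) * (F * (1 + ρ) ^ 2) := by
    have hds : 0 < (1 - c₀ * ρ) ^ 2 := by positivity
    have e1 : ρ * (1 + F) ^ 2 * (1 - c₀ * ρ) ^ 2 = ρ * (1 - ρ ^ 2) ^ 2 := by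
      linear_combination (ρ * ((1 + F) * (1 - c₀ * ρ) + (1 - ρ ^ 2))) * hFid
    have e2 : (1 + η) * (F * (1 + ρ) ^ 2) * (1 - c₀ * ρ) ^ 2
        = (1 + η) * ((c₀ - ρ) * (1 - c₀ * ρ)) * (ρ * (1 + ρ) ^ 2) := by
      linear_combination ((1 + η) * (1 + ρ) ^ 2 * (1 - c₀ * ρ)) * hFmul
    have e3 : ρ * (1 - ρ ^ 2) ^ 2 ≤ (1 + η) * ((c₀ - ρ) * (1 - c₀ * ρ)) * (ρ * (1 + ρ) ^ 2) := by
      have := mul_le_mul_of_nonneg_right hkey (by positivity : (0:ℝ) ≤ ρ * (1 + ρ) ^ 2)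
      calc ρ * (1 - ρ ^ 2) ^ 2 = (1 - ρ) ^ 2 * (ρ * (1 + ρ) ^ 2) := by ring
      _ ≤ (1 + η) * ((c₀ - ρ) * (1 - c₀ * ρ)) * (ρ * (1 + ρ) ^ 2) := this
    have e4 : ρ * (1 + F) ^ 2 * (1 - c₀ * ρ) ^ 2
        ≤ (1 + η) * (F * (1 + ρ) ^ 2) * (1 - c₀ * ρ) ^ 2 := by
      rw [e1, e2]; exact e3
    exact le_of_mul_le_mul_right e4 hds
  -- (i): F(1+σ)² ≤ σ(1+F)²
  have hi : F * (1 + σ) ^ 2 ≤ σ * (1 + F) ^ 2 := by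
    nlinarith [mul_nonneg (sub_nonneg.mpr hσF) (sub_nonneg.mpr (by nlinarith : σ * F ≤ 1))]
  have hcomb : (ρ * (1 + σ) ^ 2) * (F * (1 + F) ^ 2)
      ≤ ((1 + η) * (σ * (1 + ρ) ^ 2)) * (F * (1 + F) ^ 2) := by
    calc (ρ * (1 + σ) ^ 2) * (F * (1 + F) ^ 2)
        = (ρ * (1 + F) ^ 2) * (F * (1 + σ) ^ 2) := by ring
    _ ≤ ((1 + η) * (F * (1 + ρ) ^ 2)) * (σ * (1 + F) ^ 2) :=
        mul_le_mul hii hi (by positivity) (by positivity)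
    _ = ((1 + η) * (σ * (1 + ρ) ^ 2)) * (F * (1 + F) ^ 2) := by ring
  exact le_of_mul_le_mul_right hcomb (by positivity)

lemma core_numeric {k C₁ r δ ρ : ℝ} (hk : 0 < k) (hC₁ : 0 ≤ C₁) (hr0 : 0 ≤ r) (hr1 : r < 1)
    (hδ0 : 0 < δ) (hδ1 : δ ≤ 1)
    (hδ2 : δ * (2 * (k + C₁ + 1)) ≤ 1 - r)
    (hδ3 : δ * (k + C₁ + 1) ≤ 1)
    (hδ4 : δ * (C₁ + 3 * (k + C₁ + 1) ^ 2 / (1 - r) ^ 2) ≤ C₁ + 1)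
    (hρ0 : 0 < ρ) (hρr : ρ ≤ r) :
    0 ≤ k * δ + C₁ * δ ^ 2 ∧ k * δ + C₁ * δ ^ 2 ≤ (1 - r) / 2 ∧
    0 ≤ k * δ + (C₁ + 3 * (k + C₁ + 1) ^ 2 / (1 - r) ^ 2) * δ ^ 2 ∧
    k * δ + (C₁ + 3 * (k + C₁ + 1) ^ 2 / (1 - r) ^ 2) * δ ^ 2 ≤ 1 ∧
    (1 + (k * δ + (C₁ + 3 * (k + C₁ + 1) ^ 2 / (1 - r) ^ 2) * δ ^ 2))
        * (k * δ + C₁ * δ ^ 2) ^ 2 * ρ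
      ≤ (1 - ρ) ^ 2 * ((k * δ + (C₁ + 3 * (k + C₁ + 1) ^ 2 / (1 - r) ^ 2) * δ ^ 2)
        - (k * δ + C₁ * δ ^ 2)
        - (k * δ + (C₁ + 3 * (k + C₁ + 1) ^ 2 / (1 - r) ^ 2) * δ ^ 2)
          * (k * δ + C₁ * δ ^ 2)) := by
  have hD : 0 < (1 - r) ^ 2 := by nlinarith
  have hD1 : (1 - r) ^ 2 ≤ 1 := by nlinarith
  obtain ⟨M, hM⟩ : ∃ M : ℝ, M = k + C₁ + 1 := ⟨_, rfl⟩
  obtain ⟨C, hCdef⟩ : ∃ C : ℝ, C = C₁ + 3 * (k + C₁ + 1) ^ 2 / (1 - r) ^ 2 := ⟨_, rfl⟩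
  obtain ⟨ε, hε⟩ : ∃ e : ℝ, e = k * δ + C₁ * δ ^ 2 := ⟨_, rfl⟩
  obtain ⟨η, hη⟩ : ∃ e : ℝ, e = k * δ + C * δ ^ 2 := ⟨_, rfl⟩
  rw [← hCdef, ← hε, ← hη]
  have hM1 : 1 ≤ M := by rw [hM]; linarith
  have hCpos : 0 ≤ C := by rw [hCdef]; positivity
  have hε0 : 0 ≤ ε := by rw [hε]; positivity
  have hη0 : 0 ≤ η := by rw [hη]; positivity
  have hδδ : δ ^ 2 ≤ δ := by nlinarith
  have hεM : ε ≤ M * δ := by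
    have := mul_le_mul_of_nonneg_left hδδ hC₁
    rw [hε, hM]; nlinarith
  have hδ4' : δ * C ≤ C₁ + 1 := by rw [hCdef]; exact hδ4
  have hηM : η ≤ M * δ := by
    have := mul_le_mul_of_nonneg_right hδ4' hδ0.le
    rw [hη, hM]; nlinarith
  have hδ2' : δ * (2 * M) ≤ 1 - r := by rw [hM]; exact hδ2
  have hδ3' : δ * M ≤ 1 := by rw [hM]; exact hδ3
  have hεhalf : ε ≤ (1 - r) / 2 := by nlinarith
  have hη1 : η ≤ 1 := by nlinarith
  refine ⟨hε0, hεhalf, hη0, hη1, ?_⟩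
  -- key numeric inequality
  have hMδ : 0 ≤ M * δ := by positivity
  have h2 : η * ε ≤ M ^ 2 * δ ^ 2 := by nlinarith [mul_le_mul hηM hεM hε0 hMδ]
  have hε2 : ε ^ 2 ≤ M ^ 2 * δ ^ 2 := by nlinarith [mul_le_mul hεM hεM hε0 hMδ]
  have hρ1 : ρ ≤ 1 := le_trans hρr hr1.le
  have h3 : (1 + η) * ε ^ 2 * ρ ≤ 2 * (M ^ 2 * δ ^ 2) := by
    nlinarith [mul_le_mul_of_nonneg_left hρ1 (mul_nonneg (by linarith : (0:ℝ) ≤ 1 + η) (sq_nonneg ε)), hε2, sq_nonneg ε]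
  have h4 : (1 - r) ^ 2 ≤ (1 - ρ) ^ 2 := by nlinarith
  have hA : (η - ε) * (1 - r) ^ 2 = 3 * M ^ 2 * δ ^ 2 := by
    rw [hη, hε, hCdef, hM]
    have hD' : (1 - r) ^ 2 ≠ 0 := hD.ne'
    calc _ = 3 * (k + C₁ + 1) ^ 2 / (1 - r) ^ 2 * (1 - r) ^ 2 * δ ^ 2 := by ring
      _ = _ := by rw [div_mul_cancel₀ _ hD']
  have t1 : (1 - r) ^ 2 * (η * ε) ≤ M ^ 2 * δ ^ 2 := by
    nlinarith [mul_nonneg hη0 hε0]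
  have s1 : 2 * (M ^ 2 * δ ^ 2) ≤ (1 - r) ^ 2 * (η - ε - η * ε) := by
    nlinarith [hA, t1]
  have s2 : 0 ≤ η - ε - η * ε := by
    nlinarith [s1, hD, sq_nonneg (M * δ)]
  have s3 : (1 - r) ^ 2 * (η - ε - η * ε) ≤ (1 - ρ) ^ 2 * (η - ε - η * ε) :=
    mul_le_mul_of_nonneg_right h4 s2
  linarith [h3, s1, s3]

open Nat in
lemma exp_remainder {𝔸 : Type*} [NormedRing 𝔸] [NormedAlgebra ℂ 𝔸] [CompleteSpace 𝔸] (x : 𝔸) :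
    ‖NormedSpace.exp x - 1 - x‖ ≤ ‖x‖ ^ 2 * Real.exp ‖x‖ := by
  have hs : Summable (fun n : ℕ => ((n !⁻¹ : ℂ)) • x ^ n) := NormedSpace.expSeries_summable' x
  have hs1 : Summable (fun n : ℕ => (((n + 1)!⁻¹ : ℂ)) • x ^ (n + 1)) := by
    have := (summable_nat_add_iff 1).mpr hs
    simpa using this
  have hs2 : Summable (fun n : ℕ => (((n + 2)!⁻¹ : ℂ)) • x ^ (n + 2)) := by
    have := (summable_nat_add_iff 2).mpr hs
    simpa using this
  have hexp : NormedSpace.exp x = ∑' n : ℕ, ((n !⁻¹ : ℂ)) • x ^ n := by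
    rw [NormedSpace.exp_eq_tsum (𝕂 := ℂ)]
  have e0 : NormedSpace.exp x = 1 + x + ∑' n : ℕ, (((n + 2)!⁻¹ : ℂ)) • x ^ (n + 2) := by
    rw [hexp, Summable.tsum_eq_zero_add hs, Summable.tsum_eq_zero_add hs1]
    norm_num
    abel
  have e1 : NormedSpace.exp x - 1 - x = ∑' n : ℕ, (((n + 2)!⁻¹ : ℂ)) • x ^ (n + 2) := by
    rw [e0]; abel
  rw [e1]
  have hnorm : ∀ n : ℕ, ‖(((n + 2)!⁻¹ : ℂ)) • x ^ (n + 2)‖ ≤ ‖x‖ ^ 2 * ((n !⁻¹ : ℝ) * ‖x‖ ^ n) := by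
    intro n
    have h1 : ‖(((n + 2)!⁻¹ : ℂ)) • x ^ (n + 2)‖ ≤ (((n + 2)! : ℝ))⁻¹ * ‖x‖ ^ (n + 2) := by
      rw [norm_smul]
      gcongr
      · rw [norm_inv]
        rw [Complex.norm_natCast]
      · exact norm_pow_le' x (by omega)
    have h2 : (((n + 2)! : ℝ))⁻¹ ≤ ((n ! : ℝ))⁻¹ := by
      apply inv_anti₀
      · positivity
      · exact_mod_cast Nat.factorial_le (by omega)
    calc ‖(((n + 2)!⁻¹ : ℂ)) • x ^ (n + 2)‖ ≤ (((n + 2)! : ℝ))⁻¹ * ‖x‖ ^ (n + 2) := h1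
    _ ≤ ((n ! : ℝ))⁻¹ * ‖x‖ ^ (n + 2) := by gcongr
    _ = ‖x‖ ^ 2 * ((n !⁻¹ : ℝ) * ‖x‖ ^ n) := by ring
  have hsum2 : Summable (fun n : ℕ => ‖x‖ ^ 2 * ((n !⁻¹ : ℝ) * ‖x‖ ^ n)) := by
    apply Summable.mul_left
    have := NormedSpace.expSeries_summable' (𝕂 := ℝ) ‖x‖
    simpa [smul_eq_mul] using this
  have hsnorm : Summable (fun n : ℕ => ‖(((n + 2)!⁻¹ : ℂ)) • x ^ (n + 2)‖) :=
    hsum2.of_nonneg_of_le (fun n => norm_nonneg _) hnorm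
  calc ‖∑' n : ℕ, (((n + 2)!⁻¹ : ℂ)) • x ^ (n + 2)‖
      ≤ ∑' n : ℕ, ‖(((n + 2)!⁻¹ : ℂ)) • x ^ (n + 2)‖ := norm_tsum_le_tsum_norm hsnorm
    _ ≤ ∑' n : ℕ, ‖x‖ ^ 2 * ((n !⁻¹ : ℝ) * ‖x‖ ^ n) := Summable.tsum_le_tsum hnorm hsnorm hsum2
    _ = ‖x‖ ^ 2 * Real.exp ‖x‖ := by
        rw [tsum_mul_left]
        congr 1
        rw [Real.exp_eq_exp_ℝ, NormedSpace.exp_eq_tsum (𝕂 := ℝ)]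
        simp [smul_eq_mul]

lemma mapsTo_closedBall_aux {f : ℂ → ℂ} (hm : MapsTo f (ball 0 1) (ball 0 1)) (h0 : f 0 = 0) :
    MapsTo f (ball 0 1) (closedBall (f 0) 1) := by
  rw [h0]; exact hm.mono_right ball_subset_closedBall

-- main Schwarz–Pick lower bound
lemma schwarzPick_lower {f : ℂ → ℂ} (hd : DifferentiableOn ℂ f (ball 0 1))
    (hm : MapsTo f (ball 0 1) (ball 0 1)) (h0 : f 0 = 0) {z : ℂ} (hz : z ∈ ball (0 : ℂ) 1) :
    ‖z‖ * (‖deriv f 0‖ - ‖z‖) ≤ ‖f z‖ * (1 - ‖deriv f 0‖ * ‖z‖) := by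
  rcases eq_or_ne z 0 with rfl | hz0
  · simp [h0]
  have hz1 : ‖z‖ < 1 := mem_ball_zero_iff.mp hz
  have hz0' : 0 < ‖z‖ := norm_pos_iff.mpr hz0
  have hball : ball (0 : ℂ) 1 ∈ nhds (0 : ℂ) := isOpen_ball.mem_nhds (mem_ball_self one_pos)
  set g := dslope f 0 with hg
  have hg_diff : DifferentiableOn ℂ g (ball 0 1) := (differentiableOn_dslope hball).mpr hd
  have hm' : MapsTo f (ball 0 1) (ball (f 0) 1) := by rwa [h0]
  have hgle : ∀ w ∈ ball (0 : ℂ) 1, ‖g w‖ ≤ 1 := by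
    intro w hw
    simpa using Complex.norm_dslope_le_div_of_mapsTo_ball hd (hm'.mono_right ball_subset_closedBall) hw
  set a := g 0 with ha
  have ha1 : ‖a‖ ≤ 1 := hgle 0 (mem_ball_self one_pos)
  -- claim for all κ ∈ (‖z‖, 1)
  have claim : ∀ κ : ℝ, ‖z‖ < κ → κ < 1 →
      κ ^ 2 * ‖a‖ - ‖z‖ ≤ κ ^ 2 * (‖g z‖ * (1 - ‖a‖ * ‖z‖)) := by
    intro κ hκz hκ1
    have hκ0 : 0 < κ := lt_of_le_of_lt (norm_nonneg z) hκz
    have hκn : ‖(κ : ℂ)‖ = κ := by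
      rw [Complex.norm_real, Real.norm_of_nonneg hκ0.le]
    set aa := (κ : ℂ) * a with haa
    have haan : ‖aa‖ = κ * ‖a‖ := by rw [haa, norm_mul, hκn]
    have haa1 : ‖aa‖ < 1 := by
      rw [haan]
      nlinarith [norm_nonneg a]
    -- denominator bound
    have hdenom : ∀ w ∈ ball (0 : ℂ) 1, ‖(starRingEnd ℂ) aa * ((κ : ℂ) * g w)‖ ≤ κ ^ 2 := by
      intro w hw
      rw [norm_mul, norm_mul, RCLike.norm_conj, haan, hκn]
      have h' : ‖a‖ * ‖g w‖ ≤ 1 := mul_le_one₀ ha1 (norm_nonneg _) (hgle w hw)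
      nlinarith [mul_le_mul_of_nonneg_left h' (sq_nonneg κ)]
    have hdne : ∀ w ∈ ball (0 : ℂ) 1, 1 - (starRingEnd ℂ) aa * ((κ : ℂ) * g w) ≠ 0 := by
      intro w hw h
      have h1 : ‖(starRingEnd ℂ) aa * ((κ : ℂ) * g w)‖ ≤ κ ^ 2 := hdenom w hw
      have h2 : (1 : ℂ) = (starRingEnd ℂ) aa * ((κ : ℂ) * g w) := by
        linear_combination h
      rw [← h2] at h1
      simp at h1
      rw [abs_of_pos hκ0] at h1
      nlinarith
    set p : ℂ → ℂ := fun w => ((κ : ℂ) * g w - aa) / (1 - (starRingEnd ℂ) aa * ((κ : ℂ) * g w))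
      with hp
    have hp_diff : DifferentiableOn ℂ p (ball 0 1) := by
      apply DifferentiableOn.div
      · exact (hg_diff.const_mul _).sub (differentiableOn_const _)
      · exact (differentiableOn_const _).sub ((hg_diff.const_mul _).const_mul _)
      · exact hdne
    have hp0 : p 0 = 0 := by
      rw [hp]
      simp only [← ha, ← haa]
      rw [sub_self, zero_div]
    have hpnorm : ∀ w ∈ ball (0 : ℂ) 1, ‖p w‖ ≤ 1 := by
      intro w hw
      rw [hp, norm_div]
      have hnum := aux_mobius aa ((κ : ℂ) * g w) haa1.le (by
        rw [norm_mul, hκn]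
        nlinarith [hgle w hw, norm_nonneg (g w)])
      have hden : 0 < ‖1 - (starRingEnd ℂ) aa * ((κ : ℂ) * g w)‖ :=
        norm_pos_iff.mpr (hdne w hw)
      rw [div_le_one hden]
      exact hnum
    -- q = κ • p maps ball to ball
    set q : ℂ → ℂ := fun w => (κ : ℂ) * p w with hq
    have hq_diff : DifferentiableOn ℂ q (ball 0 1) := hp_diff.const_mul _
    have hq_maps : MapsTo q (ball 0 1) (ball 0 1) := by
      intro w hw
      rw [mem_ball_zero_iff, hq]
      simp only []
      rw [norm_mul, hκn]
      calc κ * ‖p w‖ ≤ κ * 1 := by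
            exact mul_le_mul_of_nonneg_left (hpnorm w hw) hκ0.le
      _ < 1 := by linarith
    have hq0 : q 0 = 0 := by rw [hq]; simp [hp0]
    have hqz : ‖q z‖ ≤ ‖z‖ := by
      have := Complex.dist_le_dist_of_mapsTo_ball hq_diff (mapsTo_closedBall_aux hq_maps hq0) hz
      simpa [dist_eq_norm, hq0] using this
    have hpz : ‖p z‖ ≤ ‖z‖ / κ := by
      rw [le_div_iff₀ hκ0]
      calc ‖p z‖ * κ = κ * ‖p z‖ := by ring
      _ = ‖q z‖ := by rw [hq]; simp only []; rw [norm_mul, hκn]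
      _ ≤ ‖z‖ := hqz
    -- extract numerator bound
    set L : ℝ := ‖z‖ / κ with hL
    have hL0 : 0 ≤ L := by positivity
    have hL1 : L ≤ 1 := by
      rw [hL, div_le_one hκ0]; linarith
    have hnum_bound : ‖(κ : ℂ) * g z - aa‖ ≤ L * ‖1 - (starRingEnd ℂ) aa * ((κ : ℂ) * g z)‖ := by
      have hden : 0 < ‖1 - (starRingEnd ℂ) aa * ((κ : ℂ) * g z)‖ :=
        norm_pos_iff.mpr (hdne z hz)
      have := hpz
      rw [hp] at this
      simp only [norm_div] at this
      rw [div_le_iff₀ hden] at this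
      calc ‖(κ : ℂ) * g z - aa‖ ≤ ‖z‖ / κ * ‖1 - (starRingEnd ℂ) aa * ((κ : ℂ) * g z)‖ := this
      _ = L * ‖1 - (starRingEnd ℂ) aa * ((κ : ℂ) * g z)‖ := by rw [hL]
    have hw1 : ‖(κ : ℂ) * g z‖ ≤ 1 := by
      rw [norm_mul, hκn]
      nlinarith [hgle z hz, norm_nonneg (g z)]
    have := aux_pick aa ((κ : ℂ) * g z) L hL0 hL1 haa1.le hw1 hnum_bound
    rw [haan, norm_mul, hκn, hL] at this
    -- this : κ*‖a‖ - ‖z‖/κ ≤ κ*‖g z‖*(1 - κ*‖a‖*(‖z‖/κ))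
    have hsimp : κ * ‖a‖ * (‖z‖ / κ) = ‖a‖ * ‖z‖ := by
      field_simp
    rw [hsimp] at this
    have := mul_le_mul_of_nonneg_left this hκ0.le
    -- κ*(κ‖a‖ - ‖z‖/κ) ≤ κ*(κ‖gz‖(1-‖a‖‖z‖))
    have hexp : κ * (κ * ‖a‖ - ‖z‖ / κ) = κ ^ 2 * ‖a‖ - ‖z‖ := by
      field_simp
    nlinarith [this, hexp]
  -- pass to the limit κ → 1⁻
  have hlim : ‖a‖ - ‖z‖ ≤ ‖g z‖ * (1 - ‖a‖ * ‖z‖) := by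
    set h : ℝ → ℝ := fun κ => κ ^ 2 * (‖g z‖ * (1 - ‖a‖ * ‖z‖)) - (κ ^ 2 * ‖a‖ - ‖z‖) with hh
    have hcont : Continuous h := by fun_prop
    have htend : Filter.Tendsto h (nhdsWithin 1 (Iio 1)) (nhds (h 1)) :=
      (hcont.continuousAt).mono_left nhdsWithin_le_nhds
    have hev : ∀ᶠ κ in nhdsWithin (1 : ℝ) (Iio 1), 0 ≤ h κ := by
      filter_upwards [Ioo_mem_nhdsLT_of_mem (⟨hz1, le_refl (1 : ℝ)⟩ : (1:ℝ) ∈ Ioc ‖z‖ 1)]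
        with κ hκ
      have := claim κ hκ.1 hκ.2
      simp only [hh]
      linarith
    have := ge_of_tendsto htend hev
    simp only [hh] at this
    nlinarith [this]
  -- conclude
  have hfz : ‖f z‖ = ‖z‖ * ‖g z‖ := by
    rw [hg, dslope_of_ne f hz0, slope_def_module, norm_smul]
    simp only [sub_zero, h0, norm_inv]
    rw [← mul_assoc, mul_inv_cancel₀ (norm_ne_zero_iff.mpr hz0), one_mul]
  have hda : ‖deriv f 0‖ = ‖a‖ := by rw [ha, hg, dslope_same]
  rw [hda, hfz]
  have := mul_le_mul_of_nonneg_left hlim hz0'.le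
  nlinarith [this]


variable {X : Type*} [NormedAddCommGroup X] [NormedSpace ℂ X]

lemma smul_mem_ball' {u : X} (hu : ‖u‖ = 1) {lam : ℂ} (hlam : lam ∈ ball (0 : ℂ) 1) :
    lam • u ∈ ball (0 : X) 1 := by
  rw [mem_ball_zero_iff, norm_smul, hu, mul_one]
  exact mem_ball_zero_iff.mp hlam

lemma schwarz_comp_diff {w : X → X} (hw : IsSchwarzMapping w) {u : X} (hu : ‖u‖ = 1)
    (ℓ : X →L[ℂ] ℂ) (hℓ : ‖ℓ‖ = 1) :
    DifferentiableOn ℂ (fun lam : ℂ => ℓ (w (lam • u))) (ball 0 1) ∧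
      MapsTo (fun lam : ℂ => ℓ (w (lam • u))) (ball 0 1) (ball 0 1) ∧
      (fun lam : ℂ => ℓ (w (lam • u))) 0 = 0 := by
  obtain ⟨hdiff, hmaps, h0⟩ := hw
  refine ⟨?_, ?_, ?_⟩
  · apply (ℓ.differentiable.comp_differentiableOn)
    apply hdiff.comp
    · exact (differentiable_id.smul_const u).differentiableOn
    · intro lam hlam
      exact smul_mem_ball' hu hlam
  · intro lam hlam
    rw [mem_ball_zero_iff]
    calc ‖ℓ (w (lam • u))‖ ≤ ‖ℓ‖ * ‖w (lam • u)‖ := ℓ.le_opNorm _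
    _ = ‖w (lam • u)‖ := by rw [hℓ, one_mul]
    _ < 1 := mem_ball_zero_iff.mp (hmaps (smul_mem_ball' hu hlam))
  · simp only [zero_smul, h0, map_zero]

lemma schwarz_comp_deriv {w : X → X} (hw : IsSchwarzMapping w) {u : X} (hu : ‖u‖ = 1)
    (ℓ : X →L[ℂ] ℂ) :
    deriv (fun lam : ℂ => ℓ (w (lam • u))) 0 = ℓ ((fderiv ℂ w 0) u) := by
  have h1 : HasDerivAt (fun lam : ℂ => lam • u) u 0 := by
    simpa using (hasDerivAt_id (0 : ℂ)).smul_const u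
  have hw0 : DifferentiableAt ℂ w 0 :=
    hw.1.differentiableAt (isOpen_ball.mem_nhds (mem_ball_self one_pos))
  have h2 : HasFDerivAt w (fderiv ℂ w 0) ((fun lam : ℂ => lam • u) 0) := by
    simpa using hw0.hasFDerivAt
  have h3 : HasDerivAt (fun lam : ℂ => w (lam • u)) ((fderiv ℂ w 0) u) 0 := by
    exact h2.comp_hasDerivAt 0 h1
  have h4 : HasDerivAt (fun lam : ℂ => ℓ (w (lam • u))) (ℓ ((fderiv ℂ w 0) u)) 0 := by
    exact ℓ.hasFDerivAt.comp_hasDerivAt 0 h3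
  exact h4.deriv

lemma smul_norm_eq_self {y : X} (hy : y ≠ 0) :
    ((‖y‖ : ℂ)) • ((‖y‖⁻¹ : ℂ) • y) = y := by
  rw [smul_smul, mul_inv_cancel₀ (by exact_mod_cast norm_ne_zero_iff.mpr hy), one_smul]

-- Schwarz norm decrease, vector version
lemma schwarz_norm_le {w : X → X} (hw : IsSchwarzMapping w) {y : X} (hy : y ∈ ball (0 : X) 1) :
    ‖w y‖ ≤ ‖y‖ := by
  rcases eq_or_ne y 0 with rfl | hy0
  · rw [hw.2.2]
  rcases eq_or_ne (w y) 0 with h | hwy0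
  · rw [h]; simp
  obtain ⟨ℓ, hℓ1, hℓy⟩ := exists_dual_vector ℂ (w y) (norm_ne_zero_iff.mpr hwy0)
  set u := (‖y‖⁻¹ : ℂ) • y with hu_def
  have hu : ‖u‖ = 1 := norm_smul_inv_norm hy0
  obtain ⟨hfd, hfm, hf0⟩ := schwarz_comp_diff hw hu ℓ hℓ1
  have hy1 : ‖y‖ < 1 := mem_ball_zero_iff.mp hy
  have hmem : ((‖y‖ : ℂ)) ∈ ball (0 : ℂ) 1 := by
    rw [mem_ball_zero_iff, Complex.norm_real, Real.norm_of_nonneg (norm_nonneg y)]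
    exact hy1
  have hsch := Complex.dist_le_dist_of_mapsTo_ball hfd (mapsTo_closedBall_aux hfm hf0) hmem
  simp only [zero_smul, hw.2.2, map_zero] at hsch
  rw [smul_norm_eq_self hy0] at hsch
  rw [dist_zero_right, dist_zero_right, hℓy] at hsch
  calc ‖w y‖ = ‖((‖w y‖ : ℂ))‖ := by
        rw [Complex.norm_real, Real.norm_of_nonneg (norm_nonneg _)]
  _ ≤ ‖((‖y‖ : ℂ))‖ := hsch
  _ = ‖y‖ := by rw [Complex.norm_real, Real.norm_of_nonneg (norm_nonneg _)]

lemma step_estimate [CompleteSpace X] (A : X →L[ℂ] X)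
    {w : X → X} (hw : IsSchwarzMapping w) {δ : ℝ} (hδ0 : 0 ≤ δ) (hδ1 : δ ≤ 1)
    (hderiv : fderiv ℂ w 0 = NormedSpace.exp ((-δ : ℂ) • A))
    (hkub : ∀ u' : X, ‖u'‖ = 1 → ∀ ℓ ∈ normingFunctionals u', (ℓ (A u')).re ≤ kUpper A)
    {y : X} (hy : y ∈ ball (0 : X) 1) (hy0 : y ≠ 0) :
    ∃ c : ℝ, 0 ≤ c ∧ c ≤ 1 ∧
      1 - (kUpper A * δ + (‖A‖ ^ 2 * Real.exp ‖A‖) * δ ^ 2) ≤ c ∧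
      ‖y‖ * (c - ‖y‖) ≤ ‖w y‖ * (1 - c * ‖y‖) := by
  set u := (‖y‖⁻¹ : ℂ) • y with hu_def
  have hu : ‖u‖ = 1 := norm_smul_inv_norm hy0
  have hu0 : u ≠ 0 := by
    intro h; rw [h] at hu; simp at hu
  obtain ⟨ℓ, hℓ1, hℓu⟩ := exists_dual_vector ℂ u (norm_ne_zero_iff.mpr hu0)
  have hℓnorm : ℓ ∈ normingFunctionals u := ⟨hℓu, hℓ1⟩
  obtain ⟨hfd, hfm, hf0⟩ := schwarz_comp_diff hw hu ℓ hℓ1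
  set f : ℂ → ℂ := fun lam => ℓ (w (lam • u)) with hf
  set c := ‖deriv f 0‖ with hc
  have hc_eq : deriv f 0 = ℓ ((fderiv ℂ w 0) u) := schwarz_comp_deriv hw hu ℓ
  refine ⟨c, norm_nonneg _, ?_, ?_, ?_⟩
  · -- c ≤ 1
    have hm' : MapsTo f (ball 0 1) (ball (f 0) 1) := by rwa [hf0]
    have := Complex.norm_dslope_le_div_of_mapsTo_ball hfd (hm'.mono_right ball_subset_closedBall) (mem_ball_self one_pos)
    rw [dslope_same] at this
    simpa using this
  · -- lower bound on c
    set x : X →L[ℂ] X := (-δ : ℂ) • A with hx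
    have hxnorm : ‖x‖ = δ * ‖A‖ := by
      rw [hx]
      rw [norm_smul (α := ℂ) (-δ : ℂ) A]
      congr 1
      simp only [norm_neg, Complex.norm_real, Real.norm_eq_abs]
      exact _root_.abs_of_nonneg hδ0
    set R : X →L[ℂ] X := NormedSpace.exp x - 1 - x with hR
    have hRle : ‖R‖ ≤ ‖A‖ ^ 2 * Real.exp ‖A‖ * δ ^ 2 := by
      have h1 := exp_remainder x
      rw [hxnorm] at h1
      have h2 : Real.exp (δ * ‖A‖) ≤ Real.exp ‖A‖ := by
        apply Real.exp_le_exp.mpr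
        nlinarith [norm_nonneg A]
      calc ‖R‖ ≤ (δ * ‖A‖) ^ 2 * Real.exp (δ * ‖A‖) := h1
      _ ≤ (δ * ‖A‖) ^ 2 * Real.exp ‖A‖ := by
          apply mul_le_mul_of_nonneg_left h2 (by positivity)
      _ = ‖A‖ ^ 2 * Real.exp ‖A‖ * δ ^ 2 := by ring
    have hBu : (fderiv ℂ w 0) u = u + ((-δ : ℂ) • (A u)) + R u := by
      rw [hderiv]
      have : NormedSpace.exp x = 1 + x + R := by rw [hR]; abel
      rw [hx] at this ⊢
      rw [this]
      simp [ContinuousLinearMap.add_apply, ContinuousLinearMap.smul_apply]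
    have hre : 1 - (kUpper A * δ + ‖A‖ ^ 2 * Real.exp ‖A‖ * δ ^ 2) ≤ (ℓ ((fderiv ℂ w 0) u)).re := by
      rw [hBu]
      rw [map_add, map_add]
      have e1 : (ℓ u) = 1 := by rw [hℓu, hu]; norm_num
      have e2 : ℓ ((-δ : ℂ) • (A u)) = (-δ : ℂ) * ℓ (A u) := by
        rw [map_smul]; simp [smul_eq_mul]
      rw [e1, e2]
      have e3 : ((1 : ℂ) + (-δ : ℂ) * ℓ (A u) + ℓ (R u)).re
          = 1 + (-δ) * (ℓ (A u)).re + (ℓ (R u)).re := by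
        rw [show ((-δ : ℂ)) = ((-δ : ℝ) : ℂ) from by push_cast; ring]
        simp [Complex.add_re, Complex.re_ofReal_mul]
      rw [e3]
      have h4 : (ℓ (A u)).re ≤ kUpper A := hkub u hu ℓ hℓnorm
      have h5 : |(ℓ (R u)).re| ≤ ‖A‖ ^ 2 * Real.exp ‖A‖ * δ ^ 2 := by
        calc |(ℓ (R u)).re| ≤ ‖ℓ (R u)‖ := Complex.abs_re_le_norm _
        _ = ‖ℓ (R u)‖ := rfl
        _ ≤ ‖ℓ‖ * ‖R u‖ := ℓ.le_opNorm _
        _ = ‖R u‖ := by rw [hℓ1, one_mul]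
        _ ≤ ‖R‖ * ‖u‖ := R.le_opNorm u
        _ = ‖R‖ := by rw [hu, mul_one]
        _ ≤ ‖A‖ ^ 2 * Real.exp ‖A‖ * δ ^ 2 := hRle
      have h6 : -(‖A‖ ^ 2 * Real.exp ‖A‖ * δ ^ 2) ≤ (ℓ (R u)).re := by
        have := abs_le.mp h5
        linarith [this.1]
      nlinarith [h4, h6, hδ0]
    calc 1 - (kUpper A * δ + ‖A‖ ^ 2 * Real.exp ‖A‖ * δ ^ 2)
        ≤ (ℓ ((fderiv ℂ w 0) u)).re := hre
    _ ≤ ‖ℓ ((fderiv ℂ w 0) u)‖ := Complex.re_le_norm _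
    _ = c := by rw [hc, hc_eq]
  · -- main inequality
    have hy1 : ‖y‖ < 1 := mem_ball_zero_iff.mp hy
    have hmem : ((‖y‖ : ℂ)) ∈ ball (0 : ℂ) 1 := by
      rw [mem_ball_zero_iff, Complex.norm_real, Real.norm_of_nonneg (norm_nonneg y)]
      exact hy1
    have hsp := schwarzPick_lower hfd hfm hf0 hmem
    have hyn : ‖((‖y‖ : ℂ))‖ = ‖y‖ := by
      rw [Complex.norm_real, Real.norm_of_nonneg (norm_nonneg y)]
    rw [hyn] at hsp
    have hfy : f ((‖y‖ : ℂ)) = ℓ (w y) := by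
      rw [hf]
      simp only []
      rw [smul_norm_eq_self hy0]
    rw [hfy] at hsp
    have hc1 : c ≤ 1 := by
      have hm' : MapsTo f (ball 0 1) (ball (f 0) 1) := by rwa [hf0]
      have := Complex.norm_dslope_le_div_of_mapsTo_ball hfd (hm'.mono_right ball_subset_closedBall) (mem_ball_self one_pos)
      rw [dslope_same] at this
      simpa using this
    have h1cy : 0 ≤ 1 - c * ‖y‖ := by nlinarith [norm_nonneg y]
    have h2 : ‖ℓ (w y)‖ ≤ ‖w y‖ := by
      calc ‖ℓ (w y)‖ ≤ ‖ℓ‖ * ‖w y‖ := ℓ.le_opNorm _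
      _ = ‖w y‖ := by rw [hℓ1, one_mul]
    calc ‖y‖ * (c - ‖y‖) ≤ ‖ℓ (w y)‖ * (1 - c * ‖y‖) := hsp
    _ ≤ ‖w y‖ * (1 - c * ‖y‖) := mul_le_mul_of_nonneg_right h2 h1cy

end AuxiliaryLemmas

theorem schwarz_family_lower_growth {X : Type*} [NormedAddCommGroup X] [NormedSpace ℂ X]
    [CompleteSpace X]
    (hrefl : Function.Surjective (NormedSpace.inclusionInDoubleDual ℂ X))
    (A : X →L[ℂ] X) (hm : 0 < mLower A)
    (v : ℝ → ℝ → X → X)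
    (hv_schwarz : ∀ s t : ℝ, 0 ≤ s → s ≤ t → IsSchwarzMapping (v s t))
    (hv_semigroup : ∀ s t u : ℝ, 0 ≤ s → s ≤ t → t ≤ u →
      ∀ z ∈ ball (0 : X) 1, v t u (v s t z) = v s u z)
    (hv_ne : ∀ s t : ℝ, 0 ≤ s → s ≤ t → ∀ z ∈ ball (0 : X) 1, z ≠ 0 → v s t z ≠ 0)
    (hv_deriv : ∀ s t : ℝ, 0 ≤ s → s ≤ t →
      fderiv ℂ (v s t) 0 = NormedSpace.exp ((-(t - s) : ℂ) • A)) :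
    ∀ z ∈ ball (0 : X) 1, ∀ s t : ℝ, 0 ≤ s → s ≤ t →
      Real.exp (-(kUpper A) * (t - s)) * (‖z‖ / (1 + ‖z‖) ^ 2) ≤
        ‖v s t z‖ / (1 + ‖v s t z‖) ^ 2 := by
  intro z hz s t hs hst
  -- trivial case z = 0
  rcases eq_or_ne z 0 with rfl | hz0
  · rw [(hv_schwarz s t hs hst).2.2]
    simp
  -- basic facts about kUpper
  set S : Set ℝ := {x | ∃ z ℓ, ‖z‖ = 1 ∧ ℓ ∈ normingFunctionals z ∧ x = (ℓ (A z)).re} with hS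
  have hSbound : ∀ x ∈ S, |x| ≤ ‖A‖ := by
    rintro x ⟨u, ℓ, hu, ⟨hℓu, hℓ1⟩, rfl⟩
    calc |(ℓ (A u)).re| ≤ ‖ℓ (A u)‖ := Complex.abs_re_le_norm _
    _ = ‖ℓ (A u)‖ := rfl
    _ ≤ ‖ℓ‖ * ‖A u‖ := ℓ.le_opNorm _
    _ = ‖A u‖ := by rw [hℓ1, one_mul]
    _ ≤ ‖A‖ * ‖u‖ := A.le_opNorm u
    _ = ‖A‖ := by rw [hu, mul_one]
  have hSbddAbove : BddAbove S := ⟨‖A‖, fun x hx => le_trans (le_abs_self x) (hSbound x hx)⟩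
  have hSbddBelow : BddBelow S := ⟨-‖A‖, fun x hx => by
    have := hSbound x hx; have := abs_le.mp this; linarith [this.1]⟩
  have hSne : S.Nonempty := by
    have hne : (0 : X) ≠ z := fun h => hz0 h.symm
    set u : X := (‖z‖⁻¹ : ℂ) • z with hu_def
    have hu : ‖u‖ = 1 := norm_smul_inv_norm hz0
    have hu0 : u ≠ 0 := fun h => by rw [h] at hu; simp at hu
    obtain ⟨ℓ, hℓ1, hℓu⟩ := exists_dual_vector ℂ u (norm_ne_zero_iff.mpr hu0)
    exact ⟨(ℓ (A u)).re, u, ℓ, hu, ⟨hℓu, hℓ1⟩, rfl⟩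
  have hk : 0 < kUpper A := by
    have h1 : mLower A ≤ kUpper A := csInf_le_csSup hSne hSbddBelow hSbddAbove
    linarith
  have hkub : ∀ u' : X, ‖u'‖ = 1 → ∀ ℓ ∈ normingFunctionals u', (ℓ (A u')).re ≤ kUpper A := by
    intro u' hu' ℓ hℓ
    exact le_csSup hSbddAbove ⟨u', ℓ, hu', hℓ, rfl⟩
  set k := kUpper A with hkdef
  set C₁ := ‖A‖ ^ 2 * Real.exp ‖A‖ with hC₁def
  have hC₁ : 0 ≤ C₁ := by positivity
  set r := ‖z‖ with hrdef
  have hr0 : 0 < r := norm_pos_iff.mpr hz0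
  have hr1 : r < 1 := mem_ball_zero_iff.mp hz
  set C := C₁ + 3 * (k + C₁ + 1) ^ 2 / (1 - r) ^ 2 with hCdef
  have hCpos : 0 ≤ C := by rw [hCdef]; positivity
  set M := k + C₁ + 1 with hMdef
  have hM1 : 1 ≤ M := by rw [hMdef]; linarith
  -- norm equality at equal times
  have hv_eq_norm : ∀ s' : ℝ, 0 ≤ s' → ∀ y ∈ ball (0 : X) 1, y ≠ 0 → ‖v s' s' y‖ = ‖y‖ := by
    intro s' hs' y hy hy0
    have hle := schwarz_norm_le (hv_schwarz s' s' hs' le_rfl) hy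
    have hd : fderiv ℂ (v s' s') 0 = NormedSpace.exp ((-(0:ℝ) : ℂ) • A) := by
      rw [hv_deriv s' s' hs' le_rfl]
      norm_num
    obtain ⟨c, hc0, hc1, hcl, hcm⟩ := step_estimate A (hv_schwarz s' s' hs' le_rfl)
      (le_refl (0:ℝ)) zero_le_one hd hkub hy hy0
    have hc : c = 1 := by
      have : (1 : ℝ) ≤ c := by
        have := hcl; norm_num at this; linarith
      linarith
    rw [hc, one_mul] at hcm
    have hy1 : ‖y‖ < 1 := mem_ball_zero_iff.mp hy
    have hge : ‖y‖ ≤ ‖v s' s' y‖ :=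
      le_of_mul_le_mul_right hcm (by linarith)
    linarith
  -- case t = s
  rcases eq_or_lt_of_le hst with rfl | hlt
  · rw [hv_eq_norm s hs z hz hz0]
    simp only [sub_self, mul_zero, Real.exp_zero, one_mul, le_refl]
    exact le_rfl
  -- main case: τ := t - s > 0
  set τ := t - s with hτdef
  have hτ0 : 0 < τ := by rw [hτdef]; linarith
  -- the chain estimate for a given number of steps
  have chain : ∀ n : ℕ, 0 < (τ / (n+1)) → (τ / (n+1)) ≤ 1 →
      (τ / (n+1)) * (2 * M) ≤ 1 - r → (τ / (n+1)) * M ≤ 1 → (τ / (n+1)) * C ≤ C₁ + 1 →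
      r * (1 + ‖v s t z‖) ^ 2 ≤
        (1 + (k * (τ / (n+1)) + C * (τ / (n+1)) ^ 2)) ^ (n+1) * (‖v s t z‖ * (1 + r) ^ 2) := by
    intro n hδ0 hδ1 hδ2 hδ3 hδ4
    set δ := τ / (n+1) with hδdef
    set η := k * δ + C * δ ^ 2 with hηdef
    set T : ℕ → ℝ := fun i => s + i * δ with hTdef
    have hT0 : T 0 = s := by simp [hTdef]
    have hTs : ∀ i : ℕ, s ≤ T i := by
      intro i
      simp only [hTdef]
      have := mul_nonneg (Nat.cast_nonneg (α := ℝ) i) hδ0.le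
      linarith
    have hTmono : ∀ i : ℕ, T i ≤ T (i + 1) := by
      intro i
      simp only [hTdef]
      push_cast
      have : ((i : ℝ) + 1) * δ = (i : ℝ) * δ + δ := by ring
      rw [this]
      linarith
    have hTpos : ∀ i : ℕ, 0 ≤ T i := fun i => le_trans hs (hTs i)
    have hTdiff : ∀ i : ℕ, T (i + 1) - T i = δ := by
      intro i; simp only [hTdef]; push_cast; ring
    have hTN : T (n + 1) = t := by
      simp only [hTdef, hδdef]
      have : ((n : ℝ) + 1) ≠ 0 := by positivity
      push_cast
      field_simp
      ring
    -- induction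
    have main : ∀ i : ℕ, ‖v s (T i) z‖ ≤ r ∧
        r * (1 + ‖v s (T i) z‖) ^ 2 ≤ (1 + η) ^ i * (‖v s (T i) z‖ * (1 + r) ^ 2) := by
      intro i
      induction i with
      | zero =>
        rw [hT0, hv_eq_norm s hs z hz hz0]
        constructor
        · exact le_refl r
        · rw [pow_zero, one_mul]
      | succ i ih =>
        obtain ⟨ihr, ihφ⟩ := ih
        have hy : v s (T i) z ∈ ball (0 : X) 1 :=
          (hv_schwarz s (T i) hs (hTs i)).2.1 hz
        have hy0 : v s (T i) z ≠ 0 := hv_ne s (T i) hs (hTs i) z hz hz0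
        have hρ0 : 0 < ‖v s (T i) z‖ := norm_pos_iff.mpr hy0
        have hsemi : v (T i) (T (i+1)) (v s (T i) z) = v s (T (i+1)) z :=
          hv_semigroup s (T i) (T (i+1)) hs (hTs i) (hTmono i) z hz
        have hwsch := hv_schwarz (T i) (T (i+1)) (hTpos i) (hTmono i)
        have hd : fderiv ℂ (v (T i) (T (i+1))) 0 = NormedSpace.exp ((-δ : ℂ) • A) := by
          rw [hv_deriv (T i) (T (i+1)) (hTpos i) (hTmono i)]
          congr 2
          exact_mod_cast congrArg (fun x : ℝ => -x) (hTdiff i)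
        obtain ⟨c, hc0, hc1, hcl, hcm⟩ := step_estimate A hwsch hδ0.le hδ1 hd hkub hy hy0
        rw [hsemi] at hcm
        have hσmem : v s (T (i+1)) z ∈ ball (0 : X) 1 :=
          (hv_schwarz s (T (i+1)) hs (hTs (i+1))).2.1 hz
        have hσ1 : ‖v s (T (i+1)) z‖ < 1 := mem_ball_zero_iff.mp hσmem
        have hσ0 : 0 ≤ ‖v s (T (i+1)) z‖ := norm_nonneg _
        -- σ ≤ ρ ≤ r
        have hσρ : ‖v s (T (i+1)) z‖ ≤ ‖v s (T i) z‖ := by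
          rw [← hsemi]
          exact schwarz_norm_le hwsch hy
        constructor
        · exact le_trans hσρ ihr
        -- core inequality
        obtain ⟨hε0, hεhalf, hη0, hη1, hkeynum⟩ := core_numeric hk hC₁ (le_of_lt hr0) hr1
          hδ0 hδ1 hδ2 hδ3 hδ4 hρ0 ihr
        set ε := k * δ + C₁ * δ ^ 2 with hεdef
        have hρ1 : ‖v s (T i) z‖ < 1 := mem_ball_zero_iff.mp hy
        have hgap : 0 < (1 - ε) - ‖v s (T i) z‖ := by
          have : ‖v s (T i) z‖ ≤ r := ihr
          linarith
        have hc₀c : 1 - ε ≤ c := hcl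
        have hmain' : ‖v s (T i) z‖ * ((1 - ε) - ‖v s (T i) z‖)
            ≤ ‖v s (T (i+1)) z‖ * (1 - (1 - ε) * ‖v s (T i) z‖) := by
          calc ‖v s (T i) z‖ * ((1 - ε) - ‖v s (T i) z‖)
              ≤ ‖v s (T i) z‖ * (c - ‖v s (T i) z‖) := by
                apply mul_le_mul_of_nonneg_left _ hρ0.le
                linarith
          _ ≤ ‖v s (T (i+1)) z‖ * (1 - c * ‖v s (T i) z‖) := hcm
          _ ≤ ‖v s (T (i+1)) z‖ * (1 - (1 - ε) * ‖v s (T i) z‖) := by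
                apply mul_le_mul_of_nonneg_left _ hσ0
                have := mul_le_mul_of_nonneg_right hc₀c hρ0.le
                linarith
        have hstep := core_abstract hε0 hη0 hρ0 hρ1 hσ0 hσ1 rfl hgap hkeynum hmain'
        -- combine with ih
        have hm2 := mul_le_mul ihφ hstep
          (by positivity) (by positivity)
        have hcancel : (‖v s (T i) z‖ * (1 + ‖v s (T i) z‖) ^ 2)
              * (r * (1 + ‖v s (T (i+1)) z‖) ^ 2)
            ≤ (‖v s (T i) z‖ * (1 + ‖v s (T i) z‖) ^ 2)
              * ((1 + η) ^ (i+1) * (‖v s (T (i+1)) z‖ * (1 + r) ^ 2)) := by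
          calc (‖v s (T i) z‖ * (1 + ‖v s (T i) z‖) ^ 2) * (r * (1 + ‖v s (T (i+1)) z‖) ^ 2)
              = (r * (1 + ‖v s (T i) z‖) ^ 2)
                * (‖v s (T i) z‖ * (1 + ‖v s (T (i+1)) z‖) ^ 2) := by ring
          _ ≤ ((1 + η) ^ i * (‖v s (T i) z‖ * (1 + r) ^ 2))
                * ((1 + η) * (‖v s (T (i+1)) z‖ * (1 + ‖v s (T i) z‖) ^ 2)) := hm2
          _ = (‖v s (T i) z‖ * (1 + ‖v s (T i) z‖) ^ 2)
                * (((1 + η) ^ i * (1 + η)) * (‖v s (T (i+1)) z‖ * (1 + r) ^ 2)) := by ring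
          _ = (‖v s (T i) z‖ * (1 + ‖v s (T i) z‖) ^ 2)
                * ((1 + η) ^ (i+1) * (‖v s (T (i+1)) z‖ * (1 + r) ^ 2)) := by
              rw [← pow_succ]
        exact le_of_mul_le_mul_left hcancel (by positivity)
    have := (main (n+1)).2
    rw [hTN] at this
    exact this
  -- choose N₀ and pass to the limit
  set V := ‖v s t z‖ with hV
  have hVmem : v s t z ∈ ball (0 : X) 1 := (hv_schwarz s t hs hst).2.1 hz
  have hV1 : V < 1 := mem_ball_zero_iff.mp hVmem
  have hV0 : 0 ≤ V := norm_nonneg _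
  set P := τ * (1 + M + 2 * M / (1 - r) + C / (C₁ + 1)) with hPdef
  obtain ⟨N₀, hN₀⟩ := exists_nat_gt P
  have hkey : ∀ n : ℕ, N₀ ≤ n →
      Real.exp (-(k * τ) - C * τ ^ 2 / (n + 1)) * (r * (1 + V) ^ 2) ≤ V * (1 + r) ^ 2 := by
    intro n hn
    have hn1 : P < (n + 1 : ℝ) := by
      calc P < N₀ := hN₀
      _ ≤ n := by exact_mod_cast hn
      _ ≤ n + 1 := by linarith
    have hNpos : (0 : ℝ) < n + 1 := by positivity
    set δ := τ / (n + 1) with hδdef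
    have hδ0 : 0 < δ := by positivity
    have h1r : 0 < 1 - r := by linarith
    have hC₁1 : 0 < C₁ + 1 := by linarith
    -- the four conditions
    have hcond : δ ≤ 1 ∧ δ * (2 * M) ≤ 1 - r ∧ δ * M ≤ 1 ∧ δ * C ≤ C₁ + 1 := by
      have hPges : ∀ Q R : ℝ, 0 < R → τ * Q / R ≤ P → δ * Q ≤ R := by
        intro Q R hR hQR
        rw [hδdef, div_mul_eq_mul_div, div_le_iff₀ hNpos]
        calc τ * Q = (τ * Q / R) * R := by field_simp
        _ ≤ P * R := mul_le_mul_of_nonneg_right hQR hR.le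
        _ ≤ (n+1) * R := mul_le_mul_of_nonneg_right hn1.le hR.le
        _ = R * (n+1) := by ring
      have e1 : (0:ℝ) ≤ 2 * M / (1 - r) := by positivity
      have e2 : (0:ℝ) ≤ C / (C₁ + 1) := by positivity
      have hsum : ∀ Q : ℝ, Q ≤ 1 + M + 2 * M / (1 - r) + C / (C₁ + 1) →
          τ * Q ≤ P := by
        intro Q hQ
        rw [hPdef]
        exact mul_le_mul_of_nonneg_left hQ hτ0.le
      have ht1 : τ * 1 / 1 ≤ P := by
        rw [div_one]
        exact hsum 1 (by linarith)
      have ht2 : τ * (2 * M) / (1 - r) ≤ P := by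
        rw [show τ * (2 * M) / (1 - r) = τ * (2 * M / (1 - r)) from by ring]
        exact hsum _ (by linarith)
      have ht3 : τ * M / 1 ≤ P := by
        rw [div_one]
        exact hsum M (by linarith)
      have ht4 : τ * C / (C₁ + 1) ≤ P := by
        rw [show τ * C / (C₁ + 1) = τ * (C / (C₁ + 1)) from by ring]
        exact hsum _ (by linarith)
      exact ⟨by simpa using hPges 1 1 one_pos ht1, hPges (2*M) (1-r) h1r ht2,
        by simpa using hPges M 1 one_pos ht3, hPges C (C₁+1) hC₁1 ht4⟩
    obtain ⟨hδ1, hδ2, hδ3, hδ4⟩ := hcond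
    have hch := chain n hδ0 hδ1 hδ2 hδ3 hδ4
    rw [← hδdef] at hch
    set η := k * δ + C * δ ^ 2 with hηdef
    have hη0 : 0 ≤ η := by positivity
    -- (1+η)^(n+1) ≤ exp(kτ + Cτ²/(n+1))
    have hexp1 : (1 + η) ≤ Real.exp η := by
      have := Real.add_one_le_exp η
      linarith
    have hexp2 : (1 + η) ^ (n+1) ≤ Real.exp ((n+1) * η) := by
      calc (1 + η) ^ (n+1) ≤ (Real.exp η) ^ (n+1) :=
            pow_le_pow_left₀ (by linarith) hexp1 (n+1)
      _ = Real.exp ((n+1) * η) := by rw [← Real.exp_nat_mul]; norm_cast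
    have hexp3 : ((n : ℝ)+1) * η = k * τ + C * τ ^ 2 / (n+1) := by
      rw [hηdef, hδdef]
      field_simp
    have hfinal : r * (1 + V) ^ 2 ≤ Real.exp (k * τ + C * τ ^ 2 / (n+1)) * (V * (1 + r) ^ 2) := by
      calc r * (1 + V) ^ 2 ≤ (1 + η) ^ (n+1) * (V * (1 + r) ^ 2) := hch
      _ ≤ Real.exp ((n+1) * η) * (V * (1 + r) ^ 2) := by
          apply mul_le_mul_of_nonneg_right hexp2 (by positivity)
      _ = Real.exp (k * τ + C * τ ^ 2 / (n+1)) * (V * (1 + r) ^ 2) := by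
          rw [← hexp3]
    have hmul := mul_le_mul_of_nonneg_left hfinal
      (Real.exp_nonneg (-(k * τ) - C * τ ^ 2 / (n+1)))
    calc Real.exp (-(k * τ) - C * τ ^ 2 / (n + 1)) * (r * (1 + V) ^ 2)
        ≤ Real.exp (-(k * τ) - C * τ ^ 2 / (n+1))
          * (Real.exp (k * τ + C * τ ^ 2 / (n+1)) * (V * (1 + r) ^ 2)) := hmul
    _ = (Real.exp (-(k * τ) - C * τ ^ 2 / (n+1)) * Real.exp (k * τ + C * τ ^ 2 / (n+1)))
          * (V * (1 + r) ^ 2) := by ring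
    _ = V * (1 + r) ^ 2 := by
        rw [← Real.exp_add]
        norm_num
  -- limit
  have htlim : Filter.Tendsto (fun n : ℕ => Real.exp (-(k * τ) - C * τ ^ 2 / (n + 1))
      * (r * (1 + V) ^ 2)) Filter.atTop (nhds (Real.exp (-(k * τ)) * (r * (1 + V) ^ 2))) := by
    have h1 : Filter.Tendsto (fun n : ℕ => C * τ ^ 2 / (n + 1 : ℝ)) Filter.atTop (nhds 0) := by
      have := tendsto_const_div_atTop_nhds_zero_nat (C * τ ^ 2)
      have h2 := this.comp (Filter.tendsto_add_atTop_nat 1)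
      have hfe : (fun n : ℕ => C * τ ^ 2 / ((n : ℝ) + 1))
          = ((fun x : ℕ => C * τ ^ 2 / (x : ℝ)) ∘ fun a : ℕ => a + 1) := by
        funext a
        simp only [Function.comp]
        push_cast
        ring_nf
      rw [hfe]
      exact h2
    have h2 : Filter.Tendsto (fun n : ℕ => -(k * τ) - C * τ ^ 2 / (n + 1 : ℝ)) Filter.atTop
        (nhds (-(k * τ) - 0)) := Filter.Tendsto.const_sub _ h1
    rw [sub_zero] at h2
    exact ((Real.continuous_exp.tendsto _).comp h2).mul_const _
  have hlim : Real.exp (-(k * τ)) * (r * (1 + V) ^ 2) ≤ V * (1 + r) ^ 2 := by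
    apply le_of_tendsto htlim
    filter_upwards [Filter.eventually_atTop.mpr ⟨N₀, fun n hn => hkey n hn⟩] with n h
    exact h
  -- conclude
  have hr2 : (0 : ℝ) < (1 + r) ^ 2 := by positivity
  have hV2 : (0 : ℝ) < (1 + V) ^ 2 := by positivity
  rw [show -k * τ = -(k * τ) from by ring, mul_div_assoc', div_le_div_iff₀ hr2 hV2]
  calc Real.exp (-(k * τ)) * r * (1 + V) ^ 2
      = Real.exp (-(k * τ)) * (r * (1 + V) ^ 2) := by ring
  _ ≤ V * (1 + r) ^ 2 := hlim
end
end

section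
/- Let $X$ be a complex Banach space with unit ball $\mathbb{B}$, and let $g : \mathbb{B} \to X$ be holomorphic with $g(0) = 0$ such that $\Re[\ell_u(Dg(z)(u))] > 0$ for all $z$ in a ball $\mathbb{B}_{r_0}$, all unit vectors $u \in X$, and all $\ell_u \in T(u)$. Then $g$ is univalent on $\mathbb{B}_{r_0}$. -/
open Metric Set

noncomputable section

theorem suffridge_univalence_criterion {X : Type*} [NormedAddCommGroup X] [NormedSpace ℂ X]
    (g : X → X) (r₀ : ℝ) (hr₀ : 0 < r₀) (hr₀' : r₀ ≤ 1)
    (hg_hol : DifferentiableOn ℂ g (ball (0 : X) 1))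
    (hg0 : g 0 = 0)
    (hpos : ∀ z ∈ ball (0 : X) r₀, ∀ u : X, ‖u‖ = 1 →
      ∀ ℓ ∈ normingFunctionals u, 0 < (ℓ (fderiv ℂ g z u)).re) :
    InjOn g (ball (0 : X) r₀) := by
  intro z₂ hz₂ z₁ hz₁ hgeq
  by_contra hne
  set u : X := z₁ - z₂ with hu
  have hu0 : u ≠ 0 := sub_ne_zero.mpr fun h => hne h.symm
  have hun : 0 < ‖u‖ := norm_pos_iff.mpr hu0
  obtain ⟨ℓ, hℓ1, hℓu⟩ := exists_dual_vector ℂ u hun.ne'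
  -- path
  set p : ℝ → X := fun t => z₂ + t • u with hp
  have hmem : ∀ t ∈ Icc (0:ℝ) 1, p t ∈ ball (0:X) r₀ := by
    intro t ht
    have : p t = (1 - t) • z₂ + t • z₁ := by
      simp only [hp, hu]; module
    rw [this]
    exact (convex_ball (0:X) r₀) hz₂ hz₁ (by linarith [ht.2]) ht.1 (by ring)
  have hmem1 : ∀ t ∈ Icc (0:ℝ) 1, p t ∈ ball (0:X) 1 :=
    fun t ht => (ball_subset_ball hr₀') (hmem t ht)
  -- derivative of f
  set f : ℝ → ℝ := fun t => (ℓ (g (p t))).re with hf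
  have hderiv : ∀ t ∈ Icc (0:ℝ) 1, HasDerivAt f (ℓ (fderiv ℂ g (p t) u)).re t := by
    intro t ht
    have hgd : DifferentiableAt ℂ g (p t) :=
      hg_hol.differentiableAt (isOpen_ball.mem_nhds (hmem1 t ht))
    have hpath : HasDerivAt p u t := by
      have h1 : HasDerivAt (fun s : ℝ => s • u) ((1:ℝ) • u) t :=
        (hasDerivAt_id t).smul_const u
      rw [one_smul] at h1
      exact h1.const_add z₂
    have hF : HasFDerivAt g ((fderiv ℂ g (p t)).restrictScalars ℝ) (p t) :=
      (hgd.hasFDerivAt).restrictScalars ℝ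
    have h2 : HasDerivAt (fun s => g (p s)) (fderiv ℂ g (p t) u) t := by
      exact hF.comp_hasDerivAt t hpath
    have h3 : HasDerivAt (fun s => ℓ (g (p s))) (ℓ (fderiv ℂ g (p t) u)) t :=
      ((ℓ.hasFDerivAt.restrictScalars ℝ).comp_hasDerivAt t h2)
    exact (Complex.reCLM.hasFDerivAt.comp_hasDerivAt t h3)
  -- positivity of derivative
  have hposd : ∀ t ∈ Icc (0:ℝ) 1, 0 < (ℓ (fderiv ℂ g (p t) u)).re := by
    intro t ht
    set u' : X := (‖u‖⁻¹ : ℂ) • u with hu'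
    have hnu' : ‖u'‖ = 1 := by
      rw [hu', norm_smul]
      simp [abs_of_pos hun, inv_mul_cancel₀ hun.ne']
    have hℓmem : ℓ ∈ normingFunctionals u' := by
      constructor
      · rw [hu', map_smul, hℓu, hnu']
        rw [smul_eq_mul]
        exact inv_mul_cancel₀ (by exact_mod_cast hun.ne')
      · exact hℓ1
    have hpos' := hpos (p t) (hmem t ht) u' hnu' ℓ hℓmem
    have hueq : u = (‖u‖ : ℂ) • u' := by
      rw [hu', smul_smul]
      rw [mul_inv_cancel₀ (by exact_mod_cast hun.ne')]
      simp
    have key : (ℓ (fderiv ℂ g (p t) u)).re = ‖u‖ * (ℓ (fderiv ℂ g (p t) u')).re := by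
      conv_lhs => rw [hueq]
      rw [map_smul, map_smul, smul_eq_mul]
      simp [Complex.mul_re]
    rw [key]; positivity
  -- strict monotonicity
  have hcont : ContinuousOn f (Icc 0 1) :=
    fun t ht => ((hderiv t ht).continuousAt).continuousWithinAt
  have hmono : StrictMonoOn f (Icc 0 1) := by
    apply StrictMonoOn.mono (s := Icc 0 1) ?_ le_rfl
    apply strictMonoOn_of_deriv_pos (convex_Icc 0 1) hcont
    intro t ht
    rw [interior_Icc] at ht
    rw [(hderiv t ⟨ht.1.le, ht.2.le⟩).deriv]
    exact hposd t ⟨ht.1.le, ht.2.le⟩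
  have h01 : f 0 < f 1 :=
    hmono (left_mem_Icc.mpr zero_le_one) (right_mem_Icc.mpr zero_le_one) zero_lt_one
  have hf0 : f 0 = (ℓ (g z₂)).re := by simp [hf, hp]
  have hf1 : f 1 = (ℓ (g z₁)).re := by simp [hf, hp, hu]
  rw [hf0, hf1, hgeq] at h01
  exact lt_irrefl _ h01
end
end
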